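/- arXiv:2112.00408 — 4 statements merged into one kernel-verified Lean document; each statement's English description precedes it below -/
import Mathlib

section
/- Weak triangle inequality for p-DTW: let (X,ρ) be a metric space, let m₁, m₂ ≥ 2 be natural numbers, let x and z be point sequences over X each of complexity at most m₁, let y be a point sequence over X of complexity m₂, and let p ∈ [1,∞). Then dtw_p(x,z) ≤ m₁^{1/p} · ( dtw_p(x,y) + dtw_p(y,z) ). -/
open scoped BigOperators

/-- An `(m₁, m₂)`-warping (with 0-based indices): a sequence of index pairs starting at
`(0,0)`, ending at `(m₁-1, m₂-1)`, whose consecutive increments lie in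
`{(0,1), (1,0), (1,1)}`. -/
def IsWarping (m₁ m₂ : ℕ) (W : List (ℕ × ℕ)) : Prop :=
  W ≠ [] ∧ W.head? = some (0, 0) ∧ W.getLast? = some (m₁ - 1, m₂ - 1) ∧
    ∀ k, k + 1 < W.length →
      W.getD (k + 1) (0, 0) = ((W.getD k (0, 0)).1, (W.getD k (0, 0)).2 + 1) ∨
      W.getD (k + 1) (0, 0) = ((W.getD k (0, 0)).1 + 1, (W.getD k (0, 0)).2) ∨
      W.getD (k + 1) (0, 0) = ((W.getD k (0, 0)).1 + 1, (W.getD k (0, 0)).2 + 1)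

/-- The cost `Σ_{(i,j) ∈ W} ρ(σ_i, τ_j)^p` of a warping `W`. -/
noncomputable def warpCost {X : Type*} [MetricSpace X] [Inhabited X]
    (p : ℝ) (σ τ : List X) (W : List (ℕ × ℕ)) : ℝ :=
  (W.map fun ij => dist (σ.getD ij.1 default) (τ.getD ij.2 default) ^ p).sum

/-- The `p`-dynamic time warping distance between two point sequences. -/
noncomputable def dtw {X : Type*} [MetricSpace X] [Inhabited X] (p : ℝ) (σ τ : List X) : ℝ :=
  sInf { c : ℝ | ∃ W, IsWarping σ.length τ.length W ∧ c = warpCost p σ τ W ^ (1 / p) }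

/-- `cost_p^q(T, c) = Σ_{τ ∈ T} dtw_p(c, τ)^q`. -/
noncomputable def dtwCost {X : Type*} [MetricSpace X] [Inhabited X]
    (p q : ℝ) (T : Finset (List X)) (c : List X) : ℝ :=
  ∑ τ ∈ T, dtw p c τ ^ q

/-- `σ` is a point sequence of complexity at most `ℓ`, i.e. `σ ∈ X^{≤ℓ}`. -/
def SeqLE {X : Type*} (ℓ : ℕ) (σ : List X) : Prop := 2 ≤ σ.length ∧ σ.length ≤ ℓ

/-- Allowed warping step. -/
def WTStep (a b : ℕ × ℕ) : Prop :=
  b = (a.1, a.2 + 1) ∨ b = (a.1 + 1, a.2) ∨ b = (a.1 + 1, a.2 + 1)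


theorem isWarping_iff (m₁ m₂ : ℕ) (W : List (ℕ × ℕ)) :
    IsWarping m₁ m₂ W ↔ W ≠ [] ∧ W.head? = some (0, 0) ∧
      W.getLast? = some (m₁ - 1, m₂ - 1) ∧ W.IsChain WTStep := by
  unfold IsWarping
  refine and_congr_right fun h1 => and_congr_right fun h2 => and_congr_right fun h3 => ?_
  rw [List.isChain_iff_getElem]
  constructor
  · intro h k hk
    have hk2 : k + 1 < W.length := by omega
    have h' := h k hk2
    have hk1 : k < W.length := by omega
    rw [List.getD_eq_getElem _ _ hk2, List.getD_eq_getElem _ _ hk1] at h'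
    simpa [WTStep, List.get_eq_getElem] using h'
  · intro h k hk
    have hk1 : k < W.length := by omega
    have hk0 : k < W.length - 1 := by omega
    have h' := h k (by omega)
    rw [List.getD_eq_getElem _ _ hk, List.getD_eq_getElem _ _ hk1]
    simpa [WTStep, List.get_eq_getElem] using h'

/-- The diagonal warping. -/
def diagW (n₁ n₂ : ℕ) : List (ℕ × ℕ) :=
  (List.range (max n₁ n₂)).map fun t => (min t (n₁ - 1), min t (n₂ - 1))

theorem diagW_isWarping (n₁ n₂ : ℕ) (h₁ : 1 ≤ n₁) (h₂ : 1 ≤ n₂) :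
    IsWarping n₁ n₂ (diagW n₁ n₂) := by
  have hN : 1 ≤ max n₁ n₂ := le_trans h₁ (le_max_left _ _)
  have hlen : (diagW n₁ n₂).length = max n₁ n₂ := by simp [diagW]
  have hgetD : ∀ k, k < max n₁ n₂ →
      (diagW n₁ n₂).getD k (0,0) = (min k (n₁-1), min k (n₂-1)) := by
    intro k hk
    have hk' : k < (diagW n₁ n₂).length := by omega
    rw [List.getD_eq_getElem _ _ hk']
    simp [diagW]
  refine ⟨by simp [← List.length_pos_iff_ne_nil, hlen]; omega, ?_, ?_, ?_⟩
  · rw [List.head?_eq_getElem?]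
    have h0 : 0 < (diagW n₁ n₂).length := by omega
    rw [List.getElem?_eq_getElem h0]
    have := hgetD 0 (by omega)
    rw [List.getD_eq_getElem _ _ h0] at this
    simp [this]
  · rw [List.getLast?_eq_getElem?]
    have h0 : (diagW n₁ n₂).length - 1 < (diagW n₁ n₂).length := by omega
    rw [List.getElem?_eq_getElem h0]
    have := hgetD (max n₁ n₂ - 1) (by omega)
    rw [List.getD_eq_getElem _ _ (by omega : max n₁ n₂ - 1 < (diagW n₁ n₂).length)] at this
    have he : (diagW n₁ n₂).length - 1 = max n₁ n₂ - 1 := by omega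
    simp only [he, this]
    congr 1
    simp only [Prod.mk.injEq]
    omega
  · intro k hk
    rw [hlen] at hk
    rw [hgetD k (by omega), hgetD (k+1) hk]
    simp only [Prod.ext_iff, Prod.mk.injEq]
    omega

/-- Remove adjacent duplicates. -/
def dedup' {α : Type*} [DecidableEq α] : List α → List α
  | [] => []
  | [a] => [a]
  | a :: b :: r => if a = b then dedup' (b :: r) else a :: dedup' (b :: r)

theorem dedup'_ne_nil {α : Type*} [DecidableEq α] (a : α) (l : List α) :
    dedup' (a :: l) ≠ [] := by
  induction l generalizing a with
  | nil => simp [dedup']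
  | cons b r ih =>
    rw [dedup']
    split <;> simp [ih b]

theorem dedup'_head? {α : Type*} [DecidableEq α] (a : α) (l : List α) :
    (dedup' (a :: l)).head? = some a := by
  induction l generalizing a with
  | nil => simp [dedup']
  | cons b r ih =>
    rw [dedup']
    split
    · rename_i h; rw [ih b, h]
    · simp

theorem dedup'_getLast? {α : Type*} [DecidableEq α] (a : α) (l : List α) :
    (dedup' (a :: l)).getLast? = (a :: l).getLast? := by
  induction l generalizing a with
  | nil => simp [dedup']
  | cons b r ih =>
    rw [dedup', List.getLast?_cons_cons]
    split
    · exact ih b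
    · have hne := dedup'_ne_nil b r
      obtain ⟨c, t, hct⟩ := List.exists_cons_of_ne_nil hne
      rw [hct, List.getLast?_cons_cons, ← hct, ih b]

theorem dedup'_chain' {α : Type*} [DecidableEq α] {R : α → α → Prop} (l : List α)
    (h : l.IsChain R) : (dedup' l).IsChain (fun a b => R a b ∧ a ≠ b) := by
  induction l with
  | nil => simp [dedup']
  | cons a l ih =>
    cases l with
    | nil => simp [dedup']
    | cons b r =>
      rw [List.isChain_cons_cons] at h
      rw [dedup']
      split
      · exact ih h.2
      · rename_i hne
        rw [List.isChain_cons]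
        refine ⟨?_, ih h.2⟩
        intro c hc
        rw [dedup'_head? b r] at hc
        cases hc
        exact ⟨h.1, hne⟩

theorem dedup'_sum_le {α : Type*} [DecidableEq α] (f : α → ℝ) (hf : ∀ x, 0 ≤ f x) (l : List α) :
    ((dedup' l).map f).sum ≤ (l.map f).sum := by
  induction l with
  | nil => simp [dedup']
  | cons a l ih =>
    cases l with
    | nil => simp [dedup']
    | cons b r =>
      rw [dedup']
      split
      · refine le_trans ih ?_
        simp only [List.map_cons, List.sum_cons]
        nlinarith [hf a]
      · simp only [List.map_cons, List.sum_cons] at ih ⊢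
        linarith

/-- Compose two warpings, recording the middle index. -/
def comp3 : List (ℕ × ℕ) → List (ℕ × ℕ) → List (ℕ × ℕ × ℕ)
  | [], _ => []
  | _ :: _, [] => []
  | [a], [b] => [(a.1, b.1, b.2)]
  | [a], b :: b' :: r₂ => (a.1, b.1, b.2) :: comp3 [a] (b' :: r₂)
  | a :: a' :: r₁, [b] => (a.1, b.1, b.2) :: comp3 (a' :: r₁) [b]
  | a :: a' :: r₁, b :: b' :: r₂ =>
    (a.1, b.1, b.2) ::
      (if a'.2 = a.2 then comp3 (a' :: r₁) (b :: b' :: r₂)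
       else if b'.1 = b.1 then comp3 (a :: a' :: r₁) (b' :: r₂)
       else comp3 (a' :: r₁) (b' :: r₂))
  termination_by l₁ l₂ => l₁.length + l₂.length
  decreasing_by all_goals simp <;> omega

theorem comp3_ne_nil (a b : ℕ × ℕ) (r₁ r₂ : List (ℕ × ℕ)) :
    comp3 (a :: r₁) (b :: r₂) ≠ [] := by
  cases r₁ <;> cases r₂ <;> rw [comp3] <;> simp

theorem comp3_head? (a b : ℕ × ℕ) (r₁ r₂ : List (ℕ × ℕ)) :
    (comp3 (a :: r₁) (b :: r₂)).head? = some (a.1, b.1, b.2) := by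
  cases r₁ <;> cases r₂ <;> rw [comp3] <;> simp

theorem comp3_getLast? (l₁ l₂ : List (ℕ × ℕ)) (h₁ : l₁ ≠ []) (h₂ : l₂ ≠ []) :
    (comp3 l₁ l₂).getLast? =
      some ((l₁.getLastD (0,0)).1, (l₂.getLastD (0,0)).1, (l₂.getLastD (0,0)).2) := by
  induction l₁, l₂ using comp3.induct with
  | case1 l₂ => exact absurd rfl h₁
  | case2 l₁ h => exact absurd rfl h₂
  | case3 a b => simp [comp3]
  | case4 a b b' r₂ ih =>
    rw [comp3]
    have hne := comp3_ne_nil a b' [] r₂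
    obtain ⟨c, t, hct⟩ := List.exists_cons_of_ne_nil hne
    rw [hct, List.getLast?_cons_cons, ← hct, ih (by simp) (by simp)]
    simp
  | case5 a a' r₁ b ih =>
    rw [comp3]
    have hne := comp3_ne_nil a' b r₁ ([])
    obtain ⟨c, t, hct⟩ := List.exists_cons_of_ne_nil hne
    rw [hct, List.getLast?_cons_cons, ← hct, ih (by simp) (by simp)]
    simp
  | case6 a a' r₁ b b' r₂ ih1 ih2 ih3 =>
    rw [comp3]
    split
    · have hne := comp3_ne_nil a' b r₁ (b' :: r₂)
      obtain ⟨c, t, hct⟩ := List.exists_cons_of_ne_nil hne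
      rw [hct, List.getLast?_cons_cons, ← hct, ih1 (by simp) (by simp)]
      simp
    · split
      · have hne := comp3_ne_nil a b' (a' :: r₁) r₂
        obtain ⟨c, t, hct⟩ := List.exists_cons_of_ne_nil hne
        rw [hct, List.getLast?_cons_cons, ← hct, ih2 (by simp) (by simp)]
        simp
      · have hne := comp3_ne_nil a' b' r₁ r₂
        obtain ⟨c, t, hct⟩ := List.exists_cons_of_ne_nil hne
        rw [hct, List.getLast?_cons_cons, ← hct, ih3 (by simp) (by simp)]
        simp

/-- Coarse step relation on composed triples. -/
def WTR3 (s t : ℕ × ℕ × ℕ) : Prop :=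
  (t.1 = s.1 ∨ t.1 = s.1 + 1) ∧ (t.2.2 = s.2.2 ∨ t.2.2 = s.2.2 + 1)

theorem comp3_chain' (l₁ l₂ : List (ℕ × ℕ))
    (h₁ : l₁.IsChain WTStep) (h₂ : l₂.IsChain WTStep) :
    (comp3 l₁ l₂).IsChain WTR3 := by
  induction l₁, l₂ using comp3.induct with
  | case1 l₂ => simp [comp3]
  | case2 l₁ h => rw [comp3]; simp
  | case3 a b => simp [comp3]
  | case4 a b b' r₂ ih =>
    rw [comp3, List.isChain_cons]
    rw [List.isChain_cons_cons] at h₂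
    refine ⟨?_, ih h₁ h₂.2⟩
    intro c hc
    rw [comp3_head?] at hc
    cases hc
    rcases h₂.1 with h | h | h <;> rw [h] <;> simp [WTR3]
  | case5 a a' r₁ b ih =>
    rw [comp3, List.isChain_cons]
    rw [List.isChain_cons_cons] at h₁
    refine ⟨?_, ih h₁.2 h₂⟩
    intro c hc
    rw [comp3_head?] at hc
    cases hc
    rcases h₁.1 with h | h | h <;> rw [h] <;> simp [WTR3]
  | case6 a a' r₁ b b' r₂ ih1 ih2 ih3 =>
    rw [comp3]
    rw [List.isChain_cons_cons] at h₁ h₂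
    split
    · rw [List.isChain_cons]
      refine ⟨?_, ih1 h₁.2 (List.isChain_cons_cons.mpr h₂)⟩
      intro c hc
      rw [comp3_head?] at hc
      cases hc
      rcases h₁.1 with h | h | h <;> rw [h] <;> simp [WTR3]
    · split
      · rw [List.isChain_cons]
        refine ⟨?_, ih2 (List.isChain_cons_cons.mpr h₁) h₂.2⟩
        intro c hc
        rw [comp3_head?] at hc
        cases hc
        rcases h₂.1 with h | h | h <;> rw [h] <;> simp [WTR3]
      · rw [List.isChain_cons]
        refine ⟨?_, ih3 h₁.2 h₂.2⟩
        intro c hc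
        rw [comp3_head?] at hc
        cases hc
        rcases h₁.1 with h | h | h <;> rcases h₂.1 with h' | h' | h' <;>
          rw [h, h'] <;> simp [WTR3]

theorem chain'_le_getLastD (l : List (ℕ × ℕ)) (h : l.IsChain WTStep) :
    ∀ c ∈ l, c.1 ≤ (l.getLastD (0,0)).1 ∧ c.2 ≤ (l.getLastD (0,0)).2 := by
  induction l with
  | nil => simp
  | cons a l ih =>
    cases l with
    | nil => intro c hc; simp at hc; simp [hc]
    | cons a' r =>
      rw [List.isChain_cons_cons] at h
      intro c hc
      rw [List.getLastD_cons]
      have hstep : a.1 ≤ a'.1 ∧ a.2 ≤ a'.2 := by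
        rcases h.1 with h' | h' | h' <;> rw [h'] <;> simp
      rcases List.mem_cons.mp hc with rfl | hc'
      · have := ih h.2 a' List.mem_cons_self
        simp only [List.getLastD_cons] at this ⊢
        omega
      · have := ih h.2 c hc'
        simp only [List.getLastD_cons] at this ⊢
        exact this

theorem comp3_cost1 (m : ℕ) (f : ℕ × ℕ → ℝ) (hf : ∀ w, 0 ≤ f w)
    (l₁ l₂ : List (ℕ × ℕ)) :
    l₁ ≠ [] → l₂ ≠ [] → l₁.IsChain WTStep → l₂.IsChain WTStep →
    (l₁.headD (0,0)).2 = (l₂.headD (0,0)).1 →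
    (l₁.getLastD (0,0)).2 = (l₂.getLastD (0,0)).1 →
    (∀ w ∈ l₂, w.2 < m) →
    ((comp3 l₁ l₂).map (fun t => f (t.1, t.2.1))).sum ≤
      ((m : ℝ) - (l₂.headD (0,0)).2) * f (l₁.headD (0,0)) +
        (m : ℝ) * ((l₁.tail).map f).sum := by
  induction l₁, l₂ using comp3.induct with
  | case1 l₂ =>
    intro h _ _ _ _ _ _
    exact absurd rfl h
  | case2 l₁ _ =>
    intro _ h _ _ _ _ _
    exact absurd rfl h
  | case3 a b =>
    intro hne1 hne2 hc1 hc2 hh hl hb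
    simp only [List.headD_cons] at hh ⊢
    have hab : (a.1, b.1) = a := by rw [← hh]
    have hbm : b.2 < m := hb b (by simp)
    have h1 : (1:ℝ) ≤ (m:ℝ) - (b.2:ℝ) := by
      have : (b.2:ℝ) + 1 ≤ (m:ℝ) := by exact_mod_cast hbm
      linarith
    simp only [comp3, List.map_cons, List.map_nil, List.sum_cons, List.sum_nil, List.tail_cons,
      add_zero, mul_zero]
    rw [hab]
    nlinarith [hf a]
  | case4 a b b' r₂ ih =>
    intro hne1 hne2 hc1 hc2 hh hl hb
    simp only [List.headD_cons, List.getLastD_cons] at hh hl ⊢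
    -- derive b'.1 = b.1 and b'.2 = b.2 + 1
    rw [List.isChain_cons_cons] at hc2
    have hmono := chain'_le_getLastD _ hc2.2 b' (by simp)
    simp only [List.getLastD_cons, List.getLastD_nil] at hmono hl
    have hbb : b'.1 = b.1 ∧ b'.2 = b.2 + 1 := by
      generalize r₂.getLastD b' = g at hl hmono
      rcases hc2.1 with h' | h' | h' <;> rw [h'] at hmono ⊢ <;> simp at hmono ⊢ <;> omega
    obtain ⟨hb'1, hb'2⟩ := hbb
    have hab : (a.1, b.1) = a := by rw [← hh]
    have ihr := ih (by simp) (by simp) hc1 hc2.2 (by simpa using hh.trans hb'1.symm)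
      (by simpa only [List.getLastD_cons, List.getLastD_nil] using hl) (fun w hw => hb w (by simp [hw]))
    simp only [List.headD_cons, List.tail_cons, List.map_nil, List.sum_nil, mul_zero,
      add_zero] at ihr ⊢
    rw [comp3]
    simp only [List.map_cons, List.sum_cons]
    rw [hab, hb'2] at *
    push_cast at ihr ⊢
    linarith
  | case5 a a' r₁ b ih =>
    intro hne1 hne2 hc1 hc2 hh hl hb
    simp only [List.headD_cons, List.getLastD_cons] at hh hl ⊢
    rw [List.isChain_cons_cons] at hc1
    have hmono := chain'_le_getLastD _ hc1.2 a' (by simp)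
    simp only [List.getLastD_cons, List.getLastD_nil] at hmono hl
    have ha'2 : a'.2 = a.2 := by
      generalize r₁.getLastD a' = g at hl hmono
      rcases hc1.1 with h' | h' | h' <;> rw [h'] at hmono ⊢ <;> simp at hmono ⊢ <;> omega
    have hab : (a.1, b.1) = a := by rw [← hh]
    have hbm : b.2 < m := hb b (by simp)
    have h1 : (1:ℝ) ≤ (m:ℝ) - (b.2:ℝ) := by
      have : (b.2:ℝ) + 1 ≤ (m:ℝ) := by exact_mod_cast hbm
      linarith
    have ihr := ih (by simp) (by simp) hc1.2 hc2 (by simpa using ha'2.trans hh)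
      (by simpa only [List.getLastD_cons, List.getLastD_nil] using hl) hb
    simp only [List.headD_cons, List.tail_cons] at ihr ⊢
    rw [comp3]
    simp only [List.map_cons, List.sum_cons] at ihr ⊢
    rw [hab]
    have hm0 : (0:ℝ) ≤ (b.2:ℝ) := by positivity
    have hsum : 0 ≤ (List.map f r₁).sum := List.sum_nonneg (by
      intro u hu; obtain ⟨w, _, rfl⟩ := List.mem_map.mp hu; exact hf w)
    nlinarith [hf a, hf a']
  | case6 a a' r₁ b b' r₂ ih1 ih2 ih3 =>
    intro hne1 hne2 hc1 hc2 hh hl hb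
    simp only [List.headD_cons, List.getLastD_cons] at hh hl ⊢
    rw [List.isChain_cons_cons] at hc1 hc2
    have hab : (a.1, b.1) = a := by rw [← hh]
    have hbm : b.2 < m := hb b (by simp)
    have h1 : (1:ℝ) ≤ (m:ℝ) - (b.2:ℝ) := by
      have : (b.2:ℝ) + 1 ≤ (m:ℝ) := by exact_mod_cast hbm
      linarith
    have hm0 : (0:ℝ) ≤ (b.2:ℝ) := by positivity
    have hsum : 0 ≤ (List.map f r₁).sum := List.sum_nonneg (by
      intro u hu; obtain ⟨w, _, rfl⟩ := List.mem_map.mp hu; exact hf w)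
    rw [comp3]
    split
    · rename_i ha'2
      have ihr := ih1 (by simp) (by simp) hc1.2 (List.isChain_cons_cons.mpr hc2) (by simpa using ha'2.trans hh)
        (by simpa only [List.getLastD_cons] using hl) hb
      simp only [List.headD_cons, List.tail_cons] at ihr ⊢
      simp only [List.map_cons, List.sum_cons] at ihr ⊢
      rw [hab]
      nlinarith [hf a, hf a']
    · split
      · rename_i ha'2 hb'1
        have hb'2 : b'.2 = b.2 + 1 := by
          rcases hc2.1 with h' | h' | h' <;> rw [h'] at hb'1 ⊢ <;> simp at hb'1 ⊢ <;> omega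
        have ihr := ih2 (by simp) (by simp) (List.isChain_cons_cons.mpr hc1) hc2.2 (by simpa using hh.trans hb'1.symm)
          (by simpa only [List.getLastD_cons] using hl) (fun w hw => hb w (by simp [hw]))
        simp only [List.headD_cons, List.tail_cons] at ihr ⊢
        simp only [List.map_cons, List.sum_cons] at ihr ⊢
        rw [hab, hb'2] at *
        push_cast at ihr ⊢
        linarith
      · rename_i ha'2 hb'1
        have ha'2' : a'.2 = a.2 + 1 := by
          rcases hc1.1 with h' | h' | h' <;> rw [h'] at ha'2 ⊢ <;> simp at ha'2 ⊢ <;> omega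
        have hb'1' : b'.1 = b.1 + 1 := by
          rcases hc2.1 with h' | h' | h' <;> rw [h'] at hb'1 ⊢ <;> simp at hb'1 ⊢ <;> omega
        have hb'2 : b.2 ≤ b'.2 := by
          rcases hc2.1 with h' | h' | h' <;> rw [h'] <;> simp
        have ihr := ih3 (by simp) (by simp) hc1.2 hc2.2 (by rw [List.headD_cons, List.headD_cons, ha'2', hb'1', hh])
          (by simpa only [List.getLastD_cons] using hl) (fun w hw => hb w (by simp [hw]))
        simp only [List.headD_cons, List.tail_cons] at ihr ⊢
        simp only [List.map_cons, List.sum_cons] at ihr ⊢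
        rw [hab]
        have hb'm : b'.2 < m := hb b' (by simp)
        have h2 : (0:ℝ) ≤ (m:ℝ) - (b'.2:ℝ) := by
          have : (b'.2:ℝ) ≤ (m:ℝ) := by exact_mod_cast le_of_lt hb'm
          linarith
        have h3 : (b.2:ℝ) ≤ (b'.2:ℝ) := by exact_mod_cast hb'2
        nlinarith [hf a, hf a']

theorem comp3_cost2 (m : ℕ) (f : ℕ × ℕ → ℝ) (hf : ∀ w, 0 ≤ f w)
    (l₁ l₂ : List (ℕ × ℕ)) :
    l₁ ≠ [] → l₂ ≠ [] → l₁.IsChain WTStep → l₂.IsChain WTStep →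
    (l₁.headD (0,0)).2 = (l₂.headD (0,0)).1 →
    (l₁.getLastD (0,0)).2 = (l₂.getLastD (0,0)).1 →
    (∀ w ∈ l₁, w.1 < m) →
    ((comp3 l₁ l₂).map (fun t => f t.2)).sum ≤
      ((m : ℝ) - (l₁.headD (0,0)).1) * f (l₂.headD (0,0)) +
        (m : ℝ) * ((l₂.tail).map f).sum := by
  induction l₁, l₂ using comp3.induct with
  | case1 l₂ =>
    intro h _ _ _ _ _ _
    exact absurd rfl h
  | case2 l₁ _ =>
    intro _ h _ _ _ _ _
    exact absurd rfl h
  | case3 a b =>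
    intro hne1 hne2 hc1 hc2 hh hl hb
    simp only [List.headD_cons] at hh ⊢
    have ham : a.1 < m := hb a (by simp)
    have h1 : (1:ℝ) ≤ (m:ℝ) - (a.1:ℝ) := by
      have : (a.1:ℝ) + 1 ≤ (m:ℝ) := by exact_mod_cast ham
      linarith
    simp only [comp3, List.map_cons, List.map_nil, List.sum_cons, List.sum_nil, List.tail_cons,
      add_zero, mul_zero]
    have hb2 : (b.1, b.2) = b := rfl
    rw [hb2]
    nlinarith [hf b]
  | case4 a b b' r₂ ih =>
    intro hne1 hne2 hc1 hc2 hh hl hb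
    simp only [List.headD_cons, List.getLastD_cons] at hh hl ⊢
    rw [List.isChain_cons_cons] at hc2
    have hmono := chain'_le_getLastD _ hc2.2 b' (by simp)
    simp only [List.getLastD_cons, List.getLastD_nil] at hmono hl
    have hbb : b'.1 = b.1 := by
      generalize r₂.getLastD b' = g at hl hmono
      rcases hc2.1 with h' | h' | h' <;> rw [h'] at hmono ⊢ <;> simp at hmono ⊢ <;> omega
    have ham : a.1 < m := hb a (by simp)
    have h1 : (1:ℝ) ≤ (m:ℝ) - (a.1:ℝ) := by
      have : (a.1:ℝ) + 1 ≤ (m:ℝ) := by exact_mod_cast ham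
      linarith
    have ihr := ih (by simp) (by simp) hc1 hc2.2 (by simpa using hh.trans hbb.symm)
      (by simpa only [List.getLastD_cons, List.getLastD_nil] using hl) hb
    simp only [List.headD_cons, List.tail_cons] at ihr ⊢
    rw [comp3]
    simp only [List.map_cons, List.sum_cons] at ihr ⊢
    have hb2 : (b.1, b.2) = b := rfl
    rw [hb2]
    have hsum : 0 ≤ (List.map f r₂).sum := List.sum_nonneg (by
      intro u hu; obtain ⟨w, _, rfl⟩ := List.mem_map.mp hu; exact hf w)
    nlinarith [hf b, hf b']
  | case5 a a' r₁ b ih =>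
    intro hne1 hne2 hc1 hc2 hh hl hb
    simp only [List.headD_cons, List.getLastD_cons] at hh hl ⊢
    rw [List.isChain_cons_cons] at hc1
    have hmono := chain'_le_getLastD _ hc1.2 a' (by simp)
    simp only [List.getLastD_cons, List.getLastD_nil] at hmono hl
    have ha'2 : a'.2 = a.2 := by
      generalize r₁.getLastD a' = g at hl hmono
      rcases hc1.1 with h' | h' | h' <;> rw [h'] at hmono ⊢ <;> simp at hmono ⊢ <;> omega
    have ha'1 : a'.1 = a.1 + 1 := by
      rcases hc1.1 with h' | h' | h' <;> rw [h'] at ha'2 ⊢ <;> simp at ha'2 ⊢ <;> omega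
    have ihr := ih (by simp) (by simp) hc1.2 hc2 (by simpa using ha'2.trans hh)
      (by simpa only [List.getLastD_cons, List.getLastD_nil] using hl) (fun w hw => hb w (by simp [hw]))
    simp only [List.headD_cons, List.tail_cons] at ihr ⊢
    rw [comp3]
    simp only [List.map_cons, List.sum_cons, List.map_nil, List.sum_nil, mul_zero,
      add_zero] at ihr ⊢
    have hb2 : (b.1, b.2) = b := rfl
    rw [hb2, ha'1] at *
    push_cast at ihr ⊢
    linarith
  | case6 a a' r₁ b b' r₂ ih1 ih2 ih3 =>
    intro hne1 hne2 hc1 hc2 hh hl hb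
    simp only [List.headD_cons, List.getLastD_cons] at hh hl ⊢
    rw [List.isChain_cons_cons] at hc1 hc2
    have ham : a.1 < m := hb a (by simp)
    have h1 : (1:ℝ) ≤ (m:ℝ) - (a.1:ℝ) := by
      have : (a.1:ℝ) + 1 ≤ (m:ℝ) := by exact_mod_cast ham
      linarith
    have hb2 : (b.1, b.2) = b := rfl
    have hsum : 0 ≤ (List.map f r₂).sum := List.sum_nonneg (by
      intro u hu; obtain ⟨w, _, rfl⟩ := List.mem_map.mp hu; exact hf w)
    rw [comp3]
    split
    · rename_i ha'2
      have ha'1 : a'.1 = a.1 + 1 := by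
        rcases hc1.1 with h' | h' | h' <;> rw [h'] at ha'2 ⊢ <;> simp at ha'2 ⊢ <;> omega
      have ihr := ih1 (by simp) (by simp) hc1.2 (List.isChain_cons_cons.mpr hc2)
        (by simpa using ha'2.trans hh)
        (by simpa only [List.getLastD_cons] using hl) (fun w hw => hb w (by simp [hw]))
      simp only [List.headD_cons, List.tail_cons] at ihr ⊢
      simp only [List.map_cons, List.sum_cons] at ihr ⊢
      rw [hb2, ha'1] at *
      push_cast at ihr ⊢
      linarith
    · split
      · rename_i ha'2 hb'1
        have ihr := ih2 (by simp) (by simp) (List.isChain_cons_cons.mpr hc1) hc2.2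
          (by simpa using hh.trans hb'1.symm)
          (by simpa only [List.getLastD_cons] using hl) hb
        simp only [List.headD_cons, List.tail_cons] at ihr ⊢
        simp only [List.map_cons, List.sum_cons] at ihr ⊢
        rw [hb2]
        nlinarith [hf b, hf b']
      · rename_i ha'2 hb'1
        have ha'2' : a'.2 = a.2 + 1 := by
          rcases hc1.1 with h' | h' | h' <;> rw [h'] at ha'2 ⊢ <;> simp at ha'2 ⊢ <;> omega
        have hb'1' : b'.1 = b.1 + 1 := by
          rcases hc2.1 with h' | h' | h' <;> rw [h'] at hb'1 ⊢ <;> simp at hb'1 ⊢ <;> omega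
        have ha'1 : a.1 ≤ a'.1 := by
          rcases hc1.1 with h' | h' | h' <;> rw [h'] <;> simp
        have ihr := ih3 (by simp) (by simp) hc1.2 hc2.2
          (by rw [List.headD_cons, List.headD_cons, ha'2', hb'1', hh])
          (by simpa only [List.getLastD_cons] using hl) (fun w hw => hb w (by simp [hw]))
        simp only [List.headD_cons, List.tail_cons] at ihr ⊢
        simp only [List.map_cons, List.sum_cons] at ihr ⊢
        rw [hb2]
        have ha'm : a'.1 < m := hb a' (by simp)
        have h2 : (0:ℝ) ≤ (m:ℝ) - (a'.1:ℝ) := by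
          have : (a'.1:ℝ) ≤ (m:ℝ) := by exact_mod_cast le_of_lt ha'm
          linarith
        have h3 : (a.1:ℝ) ≤ (a'.1:ℝ) := by exact_mod_cast ha'1
        nlinarith [hf b, hf b']

theorem list_sum_map_eq_range {α : Type*} (f : α → ℝ) (d : α) (l : List α) :
    (l.map f).sum = ∑ i ∈ Finset.range l.length, f (l.getD i d) := by
  induction l with
  | nil => simp
  | cons a t ih =>
    rw [List.map_cons, List.sum_cons, ih, List.length_cons, Finset.sum_range_succ']
    simp [add_comm]

theorem warpCost_nonneg {X : Type*} [MetricSpace X] [Inhabited X]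
    (p : ℝ) (σ τ : List X) (W : List (ℕ × ℕ)) : 0 ≤ warpCost p σ τ W := by
  refine List.sum_nonneg ?_
  intro u hu
  obtain ⟨w, _, rfl⟩ := List.mem_map.mp hu
  exact Real.rpow_nonneg dist_nonneg _

/-- **Weak triangle inequality for p-DTW** (Lemma `lem:asymtriangineq2`):
for point sequences `x, z` of complexity at most `m₁` and `y` of complexity `m₂`,
`dtw_p(x,z) ≤ m₁^{1/p} (dtw_p(x,y) + dtw_p(y,z))`. -/
theorem weak_triangle_inequality {X : Type*} [MetricSpace X] [Inhabited X]
    (m₁ m₂ : ℕ) (hm₁ : 2 ≤ m₁) (hm₂ : 2 ≤ m₂)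
    (x z y : List X)
    (hx : 2 ≤ x.length) (hxm : x.length ≤ m₁)
    (hz : 2 ≤ z.length) (hzm : z.length ≤ m₁)
    (hy : y.length = m₂)
    (p : ℝ) (hp : 1 ≤ p) :
    dtw p x z ≤ (m₁ : ℝ) ^ (1 / p) * (dtw p x y + dtw p y z) := by
  have hp0 : (0:ℝ) < p := by linarith
  have hq0 : (0:ℝ) < 1 / p := by positivity
  refine le_of_forall_pos_le_add ?_
  intro δ hδ
  have hm₁0 : (0:ℝ) < (m₁:ℝ) := by exact_mod_cast Nat.lt_of_lt_of_le Nat.zero_lt_two hm₁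
  have hM0 : (0:ℝ) < (m₁:ℝ) ^ (1/p) := Real.rpow_pos_of_pos hm₁0 _
  set ε := δ / (2 * (m₁:ℝ) ^ (1/p)) with hεdef
  have hε : 0 < ε := by positivity
  -- near-optimal warpings
  have hne_xy : {c : ℝ | ∃ W, IsWarping x.length y.length W ∧
      c = warpCost p x y W ^ (1/p)}.Nonempty :=
    ⟨_, ⟨diagW x.length y.length, diagW_isWarping _ _ (by omega) (by omega), rfl⟩⟩
  have hne_yz : {c : ℝ | ∃ W, IsWarping y.length z.length W ∧
      c = warpCost p y z W ^ (1/p)}.Nonempty :=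
    ⟨_, ⟨diagW y.length z.length, diagW_isWarping _ _ (by omega) (by omega), rfl⟩⟩
  obtain ⟨c₁, hc₁mem, hc₁lt⟩ := Real.lt_sInf_add_pos hne_xy hε
  obtain ⟨W₁, hW₁, rfl⟩ := hc₁mem
  obtain ⟨c₂, hc₂mem, hc₂lt⟩ := Real.lt_sInf_add_pos hne_yz hε
  obtain ⟨W₂, hW₂, rfl⟩ := hc₂mem
  have hc₁ : warpCost p x y W₁ ^ (1/p) < dtw p x y + ε := hc₁lt
  have hc₂ : warpCost p y z W₂ ^ (1/p) < dtw p y z + ε := hc₂lt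
  clear hc₁lt hc₂lt
  -- unpack
  rw [isWarping_iff] at hW₁ hW₂
  obtain ⟨hne₁, hh₁, hl₁, hch₁⟩ := hW₁
  obtain ⟨hne₂, hh₂, hl₂, hch₂⟩ := hW₂
  have hhd₁ : W₁.headD (0,0) = (0,0) := by
    rw [List.headD_eq_head?, hh₁]; rfl
  have hhd₂ : W₂.headD (0,0) = (0,0) := by
    rw [List.headD_eq_head?, hh₂]; rfl
  have hld₁ : W₁.getLastD (0,0) = (x.length - 1, y.length - 1) := by
    rw [List.getLastD_eq_getLast?, hl₁]; rfl
  have hld₂ : W₂.getLastD (0,0) = (y.length - 1, z.length - 1) := by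
    rw [List.getLastD_eq_getLast?, hl₂]; rfl
  have hhead : (W₁.headD (0,0)).2 = (W₂.headD (0,0)).1 := by rw [hhd₁, hhd₂]
  have hlast : (W₁.getLastD (0,0)).2 = (W₂.getLastD (0,0)).1 := by rw [hld₁, hld₂]
  have hb₂ : ∀ w ∈ W₂, w.2 < m₁ := by
    intro w hw
    have h := (chain'_le_getLastD W₂ hch₂ w hw).2
    rw [hld₂] at h
    simp only [] at h
    omega
  have hb₁ : ∀ w ∈ W₁, w.1 < m₁ := by
    intro w hw
    have h := (chain'_le_getLastD W₁ hch₁ w hw).1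
    rw [hld₁] at h
    simp only [] at h
    omega
  set T := comp3 W₁ W₂ with hT
  set L := T.map (fun t => (t.1, t.2.2)) with hLdef
  obtain ⟨a₁, r₁, hW₁e⟩ := List.exists_cons_of_ne_nil hne₁
  obtain ⟨a₂, r₂, hW₂e⟩ := List.exists_cons_of_ne_nil hne₂
  have ha₁ : a₁ = (0,0) := by rw [hW₁e] at hh₁; simpa using hh₁
  have ha₂ : a₂ = (0,0) := by rw [hW₂e] at hh₂; simpa using hh₂
  have hTne : T ≠ [] := by rw [hT, hW₁e, hW₂e]; exact comp3_ne_nil _ _ _ _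
  have hLne : L ≠ [] := by rw [hLdef]; simpa using hTne
  obtain ⟨c0, t0, hLe⟩ := List.exists_cons_of_ne_nil hLne
  have hLhead : L.head? = some ((0:ℕ), (0:ℕ)) := by
    rw [hLdef, List.head?_map, hT, hW₁e, hW₂e, comp3_head?, ha₁, ha₂]
    rfl
  have hLlast : L.getLast? = some (x.length - 1, z.length - 1) := by
    rw [hLdef, List.getLast?_map, hT, comp3_getLast? _ _ hne₁ hne₂, hld₁, hld₂]
    rfl
  have hLchain : L.IsChain
      (fun u v => (v.1 = u.1 ∨ v.1 = u.1+1) ∧ (v.2 = u.2 ∨ v.2 = u.2+1)) := by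
    rw [hLdef, List.isChain_map]
    exact (comp3_chain' _ _ hch₁ hch₂).imp (fun a b h => ⟨h.1, h.2⟩)
  set L' := dedup' L with hL'def
  have hwarp : IsWarping x.length z.length L' := by
    rw [isWarping_iff]
    refine ⟨by rw [hL'def, hLe]; exact dedup'_ne_nil _ _, ?_, ?_, ?_⟩
    · rw [hL'def, hLe, dedup'_head?]
      rw [hLe] at hLhead
      simpa using hLhead
    · rw [hL'def, hLe, dedup'_getLast?, ← hLe, hLlast]
    · have hd := dedup'_chain' L hLchain
      refine hd.imp ?_
      rintro u v ⟨⟨h1 | h1, h2 | h2⟩, hne⟩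
      · exact absurd (Prod.ext h1 h2).symm hne
      · exact Or.inl (Prod.ext h1 h2)
      · exact Or.inr (Or.inl (Prod.ext h1 h2))
      · exact Or.inr (Or.inr (Prod.ext h1 h2))
  have hbdd : BddBelow {c : ℝ | ∃ W, IsWarping x.length z.length W ∧
      c = warpCost p x z W ^ (1/p)} := by
    refine ⟨0, ?_⟩
    rintro c ⟨W, _, rfl⟩
    exact Real.rpow_nonneg (warpCost_nonneg _ _ _ _) _
  have hstep1 : dtw p x z ≤ warpCost p x z L' ^ (1/p) :=
    csInf_le hbdd ⟨L', hwarp, rfl⟩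
  -- cost comparison
  have hcost : warpCost p x z L' ≤
      (T.map (fun t => (dist (x.getD t.1 default) (y.getD t.2.1 default) +
        dist (y.getD t.2.1 default) (z.getD t.2.2 default)) ^ p)).sum := by
    have h1 : warpCost p x z L' ≤
        (L.map (fun c => dist (x.getD c.1 default) (z.getD c.2 default) ^ p)).sum :=
      dedup'_sum_le _ (fun w => Real.rpow_nonneg dist_nonneg _) L
    have h2 : (L.map (fun c => dist (x.getD c.1 default) (z.getD c.2 default) ^ p)).sum =
        (T.map (fun t => dist (x.getD t.1 default) (z.getD t.2.2 default) ^ p)).sum := by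
      rw [hLdef, List.map_map]
      rfl
    refine le_trans h1 (le_trans (le_of_eq h2) ?_)
    refine List.sum_le_sum ?_
    intro t ht
    exact Real.rpow_le_rpow dist_nonneg (dist_triangle _ _ _) (le_of_lt hp0)
  -- Minkowski
  have hmink := Real.Lp_add_le_of_nonneg (s := Finset.range T.length)
    (f := fun i => dist (x.getD (T.getD i (0,0,0)).1 default)
      (y.getD (T.getD i (0,0,0)).2.1 default))
    (g := fun i => dist (y.getD (T.getD i (0,0,0)).2.1 default)
      (z.getD (T.getD i (0,0,0)).2.2 default))
    hp (fun i _ => dist_nonneg) (fun i _ => dist_nonneg)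
  have hQ : (T.map (fun t => (dist (x.getD t.1 default) (y.getD t.2.1 default) +
      dist (y.getD t.2.1 default) (z.getD t.2.2 default)) ^ p)).sum =
      ∑ i ∈ Finset.range T.length,
        (dist (x.getD (T.getD i (0,0,0)).1 default) (y.getD (T.getD i (0,0,0)).2.1 default) +
         dist (y.getD (T.getD i (0,0,0)).2.1 default) (z.getD (T.getD i (0,0,0)).2.2 default)) ^ p :=
    list_sum_map_eq_range (fun t => (dist (x.getD t.1 default) (y.getD t.2.1 default) +
      dist (y.getD t.2.1 default) (z.getD t.2.2 default)) ^ p) (0,0,0) T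
  have hFp : ∑ i ∈ Finset.range T.length,
      dist (x.getD (T.getD i (0,0,0)).1 default) (y.getD (T.getD i (0,0,0)).2.1 default) ^ p =
      (T.map (fun t => dist (x.getD t.1 default) (y.getD t.2.1 default) ^ p)).sum :=
    (list_sum_map_eq_range (fun t => dist (x.getD t.1 default) (y.getD t.2.1 default) ^ p)
      (0,0,0) T).symm
  have hGp : ∑ i ∈ Finset.range T.length,
      dist (y.getD (T.getD i (0,0,0)).2.1 default) (z.getD (T.getD i (0,0,0)).2.2 default) ^ p =
      (T.map (fun t => dist (y.getD t.2.1 default) (z.getD t.2.2 default) ^ p)).sum :=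
    (list_sum_map_eq_range (fun t => dist (y.getD t.2.1 default) (z.getD t.2.2 default) ^ p)
      (0,0,0) T).symm
  -- cost1 application
  have hF1 : (T.map (fun t => dist (x.getD t.1 default) (y.getD t.2.1 default) ^ p)).sum ≤
      (m₁ : ℝ) * warpCost p x y W₁ := by
    have h := comp3_cost1 m₁
      (fun w => dist (x.getD w.1 default) (y.getD w.2 default) ^ p)
      (fun w => Real.rpow_nonneg dist_nonneg _) W₁ W₂ hne₁ hne₂ hch₁ hch₂ hhead hlast hb₂
    rw [hhd₁, hhd₂] at h
    have hwc : warpCost p x y W₁ =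
        dist (x.getD 0 default) (y.getD 0 default) ^ p +
          ((W₁.tail).map (fun w => dist (x.getD w.1 default) (y.getD w.2 default) ^ p)).sum := by
      rw [hW₁e, ha₁]
      simp [warpCost]
    rw [hwc]
    simp only [Nat.cast_zero, sub_zero] at h
    refine le_trans h (le_of_eq ?_)
    ring
  have hG1 : (T.map (fun t => dist (y.getD t.2.1 default) (z.getD t.2.2 default) ^ p)).sum ≤
      (m₁ : ℝ) * warpCost p y z W₂ := by
    have h := comp3_cost2 m₁
      (fun w => dist (y.getD w.1 default) (z.getD w.2 default) ^ p)
      (fun w => Real.rpow_nonneg dist_nonneg _) W₁ W₂ hne₁ hne₂ hch₁ hch₂ hhead hlast hb₁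
    rw [hhd₁, hhd₂] at h
    have hwc : warpCost p y z W₂ =
        dist (y.getD 0 default) (z.getD 0 default) ^ p +
          ((W₂.tail).map (fun w => dist (y.getD w.1 default) (z.getD w.2 default) ^ p)).sum := by
      rw [hW₂e, ha₂]
      simp [warpCost]
    rw [hwc]
    simp only [Nat.cast_zero, sub_zero] at h
    refine le_trans h (le_of_eq ?_)
    ring
  -- sums are nonneg
  have hsumF : (0:ℝ) ≤ ∑ i ∈ Finset.range T.length,
      dist (x.getD (T.getD i (0,0,0)).1 default) (y.getD (T.getD i (0,0,0)).2.1 default) ^ p :=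
    Finset.sum_nonneg fun i _ => Real.rpow_nonneg dist_nonneg _
  have hsumG : (0:ℝ) ≤ ∑ i ∈ Finset.range T.length,
      dist (y.getD (T.getD i (0,0,0)).2.1 default) (z.getD (T.getD i (0,0,0)).2.2 default) ^ p :=
    Finset.sum_nonneg fun i _ => Real.rpow_nonneg dist_nonneg _
  have hFfin : (∑ i ∈ Finset.range T.length,
      dist (x.getD (T.getD i (0,0,0)).1 default) (y.getD (T.getD i (0,0,0)).2.1 default) ^ p)
        ^ (1/p) ≤ (m₁:ℝ) ^ (1/p) * (dtw p x y + ε) := by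
    have h1 : (∑ i ∈ Finset.range T.length,
        dist (x.getD (T.getD i (0,0,0)).1 default) (y.getD (T.getD i (0,0,0)).2.1 default) ^ p)
          ^ (1/p) ≤ ((m₁:ℝ) * warpCost p x y W₁) ^ (1/p) := by
      refine Real.rpow_le_rpow hsumF ?_ (le_of_lt hq0)
      rw [hFp] at *
      exact hF1
    refine le_trans h1 ?_
    rw [Real.mul_rpow (le_of_lt hm₁0) (warpCost_nonneg _ _ _ _)]
    exact mul_le_mul_of_nonneg_left (le_of_lt hc₁) (le_of_lt hM0)
  have hGfin : (∑ i ∈ Finset.range T.length,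
      dist (y.getD (T.getD i (0,0,0)).2.1 default) (z.getD (T.getD i (0,0,0)).2.2 default) ^ p)
        ^ (1/p) ≤ (m₁:ℝ) ^ (1/p) * (dtw p y z + ε) := by
    have h1 : (∑ i ∈ Finset.range T.length,
        dist (y.getD (T.getD i (0,0,0)).2.1 default) (z.getD (T.getD i (0,0,0)).2.2 default) ^ p)
          ^ (1/p) ≤ ((m₁:ℝ) * warpCost p y z W₂) ^ (1/p) := by
      refine Real.rpow_le_rpow hsumG ?_ (le_of_lt hq0)
      rw [hGp] at *
      exact hG1
    refine le_trans h1 ?_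
    rw [Real.mul_rpow (le_of_lt hm₁0) (warpCost_nonneg _ _ _ _)]
    exact mul_le_mul_of_nonneg_left (le_of_lt hc₂) (le_of_lt hM0)
  -- put everything together
  have hmain : dtw p x z ≤ (m₁:ℝ) ^ (1/p) * (dtw p x y + ε) + (m₁:ℝ) ^ (1/p) * (dtw p y z + ε) := by
    refine le_trans hstep1 ?_
    have h2 : warpCost p x z L' ^ (1/p) ≤
        ((T.map (fun t => (dist (x.getD t.1 default) (y.getD t.2.1 default) +
          dist (y.getD t.2.1 default) (z.getD t.2.2 default)) ^ p)).sum) ^ (1/p) :=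
      Real.rpow_le_rpow (warpCost_nonneg _ _ _ _) hcost (le_of_lt hq0)
    refine le_trans h2 ?_
    rw [hQ]
    exact le_trans hmink (add_le_add hFfin hGfin)
  refine le_trans hmain (le_of_eq ?_)
  rw [hεdef]
  field_simp
  ring
end

section
/- Expected cost of a random simplified input sequence: let (X,ρ) be a metric space, let T = {τ₁,…,τₙ} be a set of n point sequences over X, each of complexity at most m, let p ∈ [1,∞), let ℓ ≤ m with ℓ ≥ 2, and let α ≥ 1. For each τ ∈ T fix an (α,ℓ)-simplification τ̃ of τ under dtw_p. If π is drawn uniformly at random from T, then E_π[ cost_p^1(T, π̃) ] ≤ (2+α) · m^{1/p} · ℓ^{1/p} · OPT_ℓ, where OPT_ℓ = min_{c ∈ X^{≤ℓ}} cost_p^1(T,c) is the optimal restricted (p,1)-mean cost of T. -/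
open scoped BigOperators

namespace DTWAux

def stepRel (a b : ℕ × ℕ) : Prop :=
  b = (a.1, a.2 + 1) ∨ b = (a.1 + 1, a.2) ∨ b = (a.1 + 1, a.2 + 1)

lemma stepRel.mono {a b : ℕ × ℕ} (h : stepRel a b) :
    a.1 ≤ b.1 ∧ a.2 ≤ b.2 := by
  rcases h with h | h | h <;> subst h <;> simp <;> omega

lemma stepRel.fst_le {a b : ℕ × ℕ} (h : stepRel a b) : b.1 ≤ a.1 + 1 := by
  rcases h with h | h | h <;> subst h <;> simp

lemma stepRel.snd_le {a b : ℕ × ℕ} (h : stepRel a b) : b.2 ≤ a.2 + 1 := by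
  rcases h with h | h | h <;> subst h <;> simp

lemma stepRel.of_fst_eq {a b : ℕ × ℕ} (h : stepRel a b) (h1 : b.1 = a.1) :
    b.2 = a.2 + 1 := by
  rcases h with h | h | h <;> subst h <;> simp at h1 ⊢ <;> omega

lemma stepRel.of_snd_eq {a b : ℕ × ℕ} (h : stepRel a b) (h1 : b.2 = a.2) :
    b.1 = a.1 + 1 := by
  rcases h with h | h | h <;> subst h <;> simp at h1 ⊢ <;> omega

lemma stepRel.fst_cases {a b : ℕ × ℕ} (h : stepRel a b) :
    b.1 = a.1 ∨ b.1 = a.1 + 1 := by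
  rcases h with h | h | h <;> subst h <;> simp

lemma stepRel.snd_cases {a b : ℕ × ℕ} (h : stepRel a b) :
    b.2 = a.2 ∨ b.2 = a.2 + 1 := by
  rcases h with h | h | h <;> subst h <;> simp

/-- every element of a step chain is coordinatewise ≤ the last element -/
lemma chain_le_getLast : ∀ {l : List (ℕ × ℕ)}, l.IsChain stepRel →
    ∀ a ∈ l, ∀ b ∈ l.getLast?, a.1 ≤ b.1 ∧ a.2 ≤ b.2
  | [] => by simp
  | [x] => by simp
  | x :: y :: t => by
    intro hc a ha b hb
    rw [List.isChain_cons_cons] at hc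
    rw [List.getLast?_cons_cons] at hb
    rcases List.mem_cons.1 ha with rfl | ha
    · have h1 := chain_le_getLast hc.2 y List.mem_cons_self b hb
      have h2 := hc.1.mono
      exact ⟨le_trans h2.1 h1.1, le_trans h2.2 h1.2⟩
    · exact chain_le_getLast hc.2 a ha b hb

/-- head is coordinatewise ≤ every element -/
lemma chain_head_le : ∀ {l : List (ℕ × ℕ)}, l.IsChain stepRel →
    ∀ a ∈ l.head?, ∀ b ∈ l, a.1 ≤ b.1 ∧ a.2 ≤ b.2
  | [] => by simp
  | x :: t => by
    intro hc a ha b hb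
    simp only [List.head?_cons, Option.mem_some_iff] at ha
    subst ha
    rcases List.mem_cons.1 hb with rfl | hb
    · simp
    · rw [List.isChain_cons] at hc
      rcases t with _ | ⟨y, t⟩
      · simp at hb
      · have hy := hc.1 y rfl
        have := chain_head_le hc.2 y (by simp) b hb
        have hm := hy.mono
        exact ⟨le_trans hm.1 this.1, le_trans hm.2 this.2⟩

lemma isWarping_iff {m₁ m₂ : ℕ} {W : List (ℕ × ℕ)} :
    IsWarping m₁ m₂ W ↔ W ≠ [] ∧ W.head? = some (0, 0) ∧
      W.getLast? = some (m₁ - 1, m₂ - 1) ∧ W.IsChain stepRel := by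
  have hiff : (∀ k, k + 1 < W.length →
      W.getD (k + 1) (0, 0) = ((W.getD k (0, 0)).1, (W.getD k (0, 0)).2 + 1) ∨
      W.getD (k + 1) (0, 0) = ((W.getD k (0, 0)).1 + 1, (W.getD k (0, 0)).2) ∨
      W.getD (k + 1) (0, 0) = ((W.getD k (0, 0)).1 + 1, (W.getD k (0, 0)).2 + 1)) ↔
      W.IsChain stepRel := by
    rw [List.isChain_iff_getElem]
    constructor
    · intro h i hi
      have hi' : i + 1 < W.length := by omega
      have e1 : W.getD i (0,0) = W.get ⟨i, by omega⟩ := List.getD_eq_getElem W _ (by omega)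
      have e2 : W.getD (i+1) (0,0) = W.get ⟨i+1, by omega⟩ := List.getD_eq_getElem W _ hi'
      have := h i hi'
      rw [e1, e2] at this
      exact this
    · intro h k hk
      have e1 : W.getD k (0,0) = W.get ⟨k, by omega⟩ := List.getD_eq_getElem W _ (by omega)
      have e2 : W.getD (k+1) (0,0) = W.get ⟨k+1, by omega⟩ := List.getD_eq_getElem W _ hk
      rw [e1, e2]
      exact h k (by omega)
  unfold IsWarping
  rw [hiff]

end DTWAux

namespace DTWAux

def laxRel (a b : ℕ × ℕ) : Prop := b = a ∨ stepRel a b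

def mergeW : List (ℕ × ℕ) → List (ℕ × ℕ) → List (ℕ × ℕ × ℕ)
  | [], _ => []
  | _ :: _, [] => []
  | [a], c :: t2 => (a.1, a.2, c.2) :: mergeW [a] t2
  | a :: b :: t1, [c] => (a.1, a.2, c.2) :: mergeW (b :: t1) [c]
  | a :: b :: t1, c :: d :: t2 =>
    (a.1, a.2, c.2) ::
      (if b.2 = a.2 then mergeW (b :: t1) (c :: d :: t2)
      else if d.1 = c.1 then mergeW (a :: b :: t1) (d :: t2)
      else mergeW (b :: t1) (d :: t2))
termination_by W1 W2 => W1.length + W2.length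

lemma mergeW_eq3 (a c : ℕ × ℕ) (t2 : List (ℕ × ℕ)) :
    mergeW [a] (c :: t2) = (a.1, a.2, c.2) :: mergeW [a] t2 := by
  simp only [mergeW]

lemma mergeW_eq4 (a b c : ℕ × ℕ) (t1 : List (ℕ × ℕ)) :
    mergeW (a :: b :: t1) [c] = (a.1, a.2, c.2) :: mergeW (b :: t1) [c] := by
  simp only [mergeW]

lemma mergeW_eq5 (a b c d : ℕ × ℕ) (t1 t2 : List (ℕ × ℕ)) :
    mergeW (a :: b :: t1) (c :: d :: t2) = (a.1, a.2, c.2) ::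
      (if b.2 = a.2 then mergeW (b :: t1) (c :: d :: t2)
      else if d.1 = c.1 then mergeW (a :: b :: t1) (d :: t2)
      else mergeW (b :: t1) (d :: t2)) := by
  simp only [mergeW]

lemma mergeW_ne_nil (a c : ℕ × ℕ) (t1 t2 : List (ℕ × ℕ)) :
    mergeW (a :: t1) (c :: t2) ≠ [] := by
  rcases t1 with _ | ⟨b, t1⟩ <;> rcases t2 with _ | ⟨d, t2⟩ <;> simp [mergeW]

lemma mergeW_head (a c : ℕ × ℕ) (t1 t2 : List (ℕ × ℕ)) :
    (mergeW (a :: t1) (c :: t2)).head? = some (a.1, a.2, c.2) := by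
  rcases t1 with _ | ⟨b, t1⟩ <;> rcases t2 with _ | ⟨d, t2⟩ <;> simp [mergeW]

lemma getLast?_cons_of_ne_nil {α : Type*} (x : α) {l : List α} (h : l ≠ []) :
    (x :: l).getLast? = l.getLast? := by
  rcases l with _ | ⟨y, l⟩
  · exact absurd rfl h
  · exact List.getLast?_cons_cons

lemma mergeW_getLast : ∀ (W1 W2 : List (ℕ × ℕ)) (u v : ℕ × ℕ),
    W1.getLast? = some u → W2.getLast? = some v →
    (mergeW W1 W2).getLast? = some (u.1, u.2, v.2) := by
  intro W1 W2
  induction W1, W2 using mergeW.induct with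
  | case1 x => simp
  | case2 h t => simp
  | case3 a c t2 ih =>
    intro u v hu hv
    simp only [List.getLast?_singleton, Option.some.injEq] at hu
    subst hu
    rcases t2 with _ | ⟨d, t2⟩
    · simp only [List.getLast?_singleton, Option.some.injEq] at hv
      subst hv
      simp [mergeW]
    · rw [List.getLast?_cons_cons] at hv
      have h2 := ih a v (by simp) hv
      rw [mergeW_eq3, getLast?_cons_of_ne_nil _ (mergeW_ne_nil _ _ _ _), h2]
  | case4 a b t1 c ih =>
    intro u v hu hv
    simp only [List.getLast?_singleton, Option.some.injEq] at hv
    subst hv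
    rw [List.getLast?_cons_cons] at hu
    have h2 := ih u c hu (by simp)
    rw [mergeW_eq4, getLast?_cons_of_ne_nil _ (mergeW_ne_nil _ _ _ _), h2]
  | case5 a b t1 c d t2 ih1 ih2 ih3 =>
    intro u v hu hv
    rw [List.getLast?_cons_cons] at hu hv
    rw [mergeW_eq5]
    by_cases hb : b.2 = a.2
    · rw [if_pos hb, getLast?_cons_of_ne_nil _ (mergeW_ne_nil _ _ _ _)]
      exact ih1 u v hu (by rw [List.getLast?_cons_cons]; exact hv)
    · rw [if_neg hb]
      by_cases hd : d.1 = c.1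
      · rw [if_pos hd, getLast?_cons_of_ne_nil _ (mergeW_ne_nil _ _ _ _)]
        exact ih2 u v (by rw [List.getLast?_cons_cons]; exact hu) hv
      · rw [if_neg hd, getLast?_cons_of_ne_nil _ (mergeW_ne_nil _ _ _ _)]
        exact ih3 u v hu hv

end DTWAux

namespace DTWAux

lemma lax_cases {i k i' k' : ℕ} (hi : i' = i ∨ i' = i + 1) (hk : k' = k ∨ k' = k + 1) :
    laxRel (i, k) (i', k') := by
  rcases hi with rfl | rfl <;> rcases hk with rfl | rfl <;>
    simp [laxRel, stepRel, Prod.ext_iff] <;> tauto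

lemma mergeW_chain : ∀ (W1 W2 : List (ℕ × ℕ)), W1.IsChain stepRel → W2.IsChain stepRel →
    (mergeW W1 W2).IsChain (fun s t => laxRel (s.1, s.2.2) (t.1, t.2.2)) := by
  intro W1 W2
  induction W1, W2 using mergeW.induct with
  | case1 x => intro _ _; simp [mergeW]
  | case2 h t => intro _ _; simp [mergeW]
  | case3 a c t2 ih =>
    intro h1 h2
    rw [mergeW_eq3]
    rcases t2 with _ | ⟨d, t2⟩
    · simp [mergeW]
    · rw [List.isChain_cons]
      refine ⟨?_, ih h1 (List.isChain_cons_cons.1 h2).2⟩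
      intro y hy
      rw [mergeW_head] at hy
      simp only [Option.mem_some_iff] at hy
      subst hy
      exact lax_cases (Or.inl rfl) ((List.isChain_cons_cons.1 h2).1.snd_cases)
  | case4 a b t1 c ih =>
    intro h1 h2
    rw [mergeW_eq4]
    rw [List.isChain_cons]
    refine ⟨?_, ih (List.isChain_cons_cons.1 h1).2 h2⟩
    intro y hy
    rw [mergeW_head] at hy
    simp only [Option.mem_some_iff] at hy
    subst hy
    exact lax_cases ((List.isChain_cons_cons.1 h1).1.fst_cases) (Or.inl rfl)
  | case5 a b t1 c d t2 ih1 ih2 ih3 =>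
    intro h1 h2
    rw [mergeW_eq5]
    have hab := (List.isChain_cons_cons.1 h1).1
    have hcd := (List.isChain_cons_cons.1 h2).1
    by_cases hb : b.2 = a.2
    · rw [if_pos hb, List.isChain_cons]
      refine ⟨?_, ih1 (List.isChain_cons_cons.1 h1).2 h2⟩
      intro y hy
      rw [mergeW_head] at hy
      simp only [Option.mem_some_iff] at hy
      subst hy
      exact lax_cases hab.fst_cases (Or.inl rfl)
    · rw [if_neg hb]
      by_cases hd : d.1 = c.1
      · rw [if_pos hd, List.isChain_cons]
        refine ⟨?_, ih2 h1 (List.isChain_cons_cons.1 h2).2⟩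
        intro y hy
        rw [mergeW_head] at hy
        simp only [Option.mem_some_iff] at hy
        subst hy
        exact lax_cases (Or.inl rfl) hcd.snd_cases
      · rw [if_neg hd, List.isChain_cons]
        refine ⟨?_, ih3 (List.isChain_cons_cons.1 h1).2 (List.isChain_cons_cons.1 h2).2⟩
        intro y hy
        rw [mergeW_head] at hy
        simp only [Option.mem_some_iff] at hy
        subst hy
        exact lax_cases hab.fst_cases hcd.snd_cases

end DTWAux

namespace DTWAux

lemma map_sum_nonneg (F : ℕ × ℕ → ℝ) (hF : ∀ x, 0 ≤ F x) (l : List (ℕ × ℕ)) :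
    0 ≤ (l.map F).sum := by
  apply List.sum_nonneg
  intro x hx
  simp only [List.mem_map] at hx
  obtain ⟨y, _, rfl⟩ := hx
  exact hF y

lemma mergeW_nil2 (a : ℕ × ℕ) (t1 : List (ℕ × ℕ)) : mergeW (a :: t1) [] = [] := by
  simp [mergeW]

lemma mergeW_sum_fst (F : ℕ × ℕ → ℝ) (hF : ∀ x, 0 ≤ F x) (C : ℕ) :
    ∀ (W1 W2 : List (ℕ × ℕ)), W1.IsChain stepRel → W2.IsChain stepRel →
    (∀ u ∈ W1.head?, ∀ v ∈ W2.head?, u.2 = v.1) →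
    (∀ u ∈ W1.getLast?, ∀ v ∈ W2.getLast?, u.2 = v.1) →
    (∀ e ∈ W2, e.2 < C) →
    ∀ a ∈ W1.head?, ∀ c ∈ W2.head?,
    ((mergeW W1 W2).map fun t => F (t.1, t.2.1)).sum ≤
      ((C - c.2 : ℕ) : ℝ) * F a + (C : ℝ) * (W1.tail.map F).sum := by
  intro W1 W2
  induction W1, W2 using mergeW.induct with
  | case1 x =>
    intro _ _ _ _ _ a ha
    simp at ha
  | case2 h t =>
    intro _ _ _ _ _ a ha c hc
    simp at hc
  | case3 a c t₂ ih =>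
    intro h1 h2 hh hl hC a' ha c' hc
    simp only [List.head?_cons, Option.mem_some_iff] at ha hc
    subst ha; subst hc
    have hac : a.2 = c.1 := hh a (by simp) c (by simp)
    obtain ⟨v, hv⟩ : ∃ v, (c :: t₂).getLast? = some v := by
      exact Option.isSome_iff_exists.1 (List.getLast?_isSome.2 (by simp))
    have hva : v.1 = a.2 := by
      have := hl a (by simp) v hv
      omega
    have hfst : ∀ e ∈ c :: t₂, e.1 = c.1 := by
      intro e he
      have h1e := chain_head_le h2 c (by simp) e he
      have h2e := chain_le_getLast h2 e he v hv
      omega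
    have hcC : c.2 < C := hC c (by simp)
    have h1C : (1 : ℝ) ≤ ((C - c.2 : ℕ) : ℝ) := by
      have : 1 ≤ C - c.2 := by omega
      exact_mod_cast this
    rcases t₂ with _ | ⟨d, t₂'⟩
    · rw [mergeW_eq3, mergeW_nil2]
      simp only [List.map_cons, List.map_nil, List.sum_cons, List.sum_nil, add_zero,
        List.tail_cons, mul_zero, Prod.mk.eta]
      have h1a := mul_le_mul_of_nonneg_right h1C (hF a)
      linarith
    · have hd1 : d.1 = c.1 := hfst d (by simp)
      have hdc : d.2 = c.2 + 1 := (List.isChain_cons_cons.1 h2).1.of_fst_eq hd1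
      have hdC : d.2 < C := hC d (by simp)
      have ihb := ih h1 (List.isChain_cons_cons.1 h2).2
        (by
          intro u hu w hw
          simp only [List.head?_cons, Option.mem_some_iff] at hu hw
          subst hu; subst hw
          omega)
        (by
          intro u hu w hw
          exact hl u hu w (by rw [List.getLast?_cons_cons]; exact hw))
        (fun e he => hC e (by simp [he]))
        a (by simp) d (by simp)
      simp only [List.tail_cons, List.map_nil, List.sum_nil, mul_zero, add_zero] at ihb
      rw [mergeW_eq3]
      simp only [List.map_cons, List.sum_cons, List.tail_cons, List.map_nil,
        List.sum_nil, mul_zero, Prod.mk.eta]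
      have hco : ((C - c.2 : ℕ) : ℝ) = ((C - d.2 : ℕ) : ℝ) + 1 := by
        have : C - c.2 = (C - d.2) + 1 := by omega
        exact_mod_cast this
      have hexp : ((C - c.2 : ℕ) : ℝ) * F a = ((C - d.2 : ℕ) : ℝ) * F a + F a := by
        rw [hco]; ring
      linarith [hF a]
  | case4 a b t₁ c ih =>
    intro h1 h2 hh hl hC a' ha c' hc
    simp only [List.head?_cons, Option.mem_some_iff] at ha hc
    subst ha; subst hc
    have hac : a.2 = c.1 := hh a (by simp) c (by simp)
    obtain ⟨u, hu⟩ : ∃ u, (b :: t₁).getLast? = some u := by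
      exact Option.isSome_iff_exists.1 (List.getLast?_isSome.2 (by simp))
    have huc : u.2 = c.1 := by
      have := hl u (by rw [List.getLast?_cons_cons]; exact hu) c (by simp)
      omega
    have hb2 : b.2 = a.2 := by
      have h1b := chain_head_le h1 a (by simp) b (by simp)
      have h2b := chain_le_getLast (List.isChain_cons_cons.1 h1).2 b (by simp) u hu
      omega
    have hcC : c.2 < C := hC c (by simp)
    have h1C : (1 : ℝ) ≤ ((C - c.2 : ℕ) : ℝ) := by
      have : 1 ≤ C - c.2 := by omega
      exact_mod_cast this
    have hCC : ((C - c.2 : ℕ) : ℝ) ≤ (C : ℝ) := by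
      have : C - c.2 ≤ C := by omega
      exact_mod_cast this
    have ihb := ih (List.isChain_cons_cons.1 h1).2 h2
      (by
        intro x hx w hw
        simp only [List.head?_cons, Option.mem_some_iff] at hx hw
        subst hx; subst hw
        omega)
      (by
        intro x hx w hw
        exact hl x (by rw [List.getLast?_cons_cons]; exact hx) w hw)
      hC b (by simp) c (by simp)
    simp only [List.tail_cons, List.map_cons, List.sum_cons] at ihb
    rw [mergeW_eq4]
    simp only [List.map_cons, List.sum_cons, List.tail_cons, Prod.mk.eta]
    have h1a := mul_le_mul_of_nonneg_right h1C (hF a)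
    have h1b := mul_le_mul_of_nonneg_right hCC (hF b)
    linarith
  | case5 a b t₁ c d t₂ ih1 ih2 ih3 =>
    intro h1 h2 hh hl hC a' ha c' hc
    simp only [List.head?_cons, Option.mem_some_iff] at ha hc
    subst ha; subst hc
    have hac : a.2 = c.1 := hh a (by simp) c (by simp)
    have hab := (List.isChain_cons_cons.1 h1).1
    have hcd := (List.isChain_cons_cons.1 h2).1
    have hcC : c.2 < C := hC c (by simp)
    have hdC : d.2 < C := hC d (by simp)
    have h1C : (1 : ℝ) ≤ ((C - c.2 : ℕ) : ℝ) := by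
      have : 1 ≤ C - c.2 := by omega
      exact_mod_cast this
    have hCC : ((C - c.2 : ℕ) : ℝ) ≤ (C : ℝ) := by
      have : C - c.2 ≤ C := by omega
      exact_mod_cast this
    rw [mergeW_eq5]
    by_cases hb : b.2 = a.2
    · rw [if_pos hb]
      have ihb := ih1 (List.isChain_cons_cons.1 h1).2 h2
        (by
          intro x hx w hw
          simp only [List.head?_cons, Option.mem_some_iff] at hx hw
          subst hx; subst hw
          omega)
        (by
          intro x hx w hw
          exact hl x (by rw [List.getLast?_cons_cons]; exact hx) w hw)
        hC b (by simp) c (by simp)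
      simp only [List.tail_cons, List.map_cons, List.sum_cons] at ihb
      simp only [List.map_cons, List.sum_cons, List.tail_cons, Prod.mk.eta]
      have h1a := mul_le_mul_of_nonneg_right h1C (hF a)
      have h1b := mul_le_mul_of_nonneg_right hCC (hF b)
      linarith
    · rw [if_neg hb]
      by_cases hd : d.1 = c.1
      · rw [if_pos hd]
        have hdc : d.2 = c.2 + 1 := hcd.of_fst_eq hd
        have ihb := ih2 h1 (List.isChain_cons_cons.1 h2).2
          (by
            intro x hx w hw
            simp only [List.head?_cons, Option.mem_some_iff] at hx hw
            subst hx; subst hw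
            omega)
          (by
            intro x hx w hw
            exact hl x hx w (by rw [List.getLast?_cons_cons]; exact hw))
          (fun e he => hC e (by simp [he]))
          a (by simp) d (by simp)
        simp only [List.tail_cons, List.map_cons, List.sum_cons] at ihb
        simp only [List.map_cons, List.sum_cons, List.tail_cons, Prod.mk.eta]
        have hco : ((C - c.2 : ℕ) : ℝ) = ((C - d.2 : ℕ) : ℝ) + 1 := by
          have : C - c.2 = (C - d.2) + 1 := by omega
          exact_mod_cast this
        have hexp : ((C - c.2 : ℕ) : ℝ) * F a = ((C - d.2 : ℕ) : ℝ) * F a + F a := by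
          rw [hco]; ring
        linarith
      · rw [if_neg hd]
        have hb2 : b.2 = a.2 + 1 := by
          rcases hab.snd_cases with h | h
          · exact absurd h hb
          · exact h
        have hd1 : d.1 = c.1 + 1 := by
          rcases hcd.fst_cases with h | h
          · exact absurd h hd
          · exact h
        have ihb := ih3 (List.isChain_cons_cons.1 h1).2 (List.isChain_cons_cons.1 h2).2
          (by
            intro x hx w hw
            simp only [List.head?_cons, Option.mem_some_iff] at hx hw
            subst hx; subst hw
            omega)
          (by
            intro x hx w hw
            refine hl x (by rw [List.getLast?_cons_cons]; exact hx) w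
              (by rw [List.getLast?_cons_cons]; exact hw))
          (fun e he => hC e (by simp [he]))
          b (by simp) d (by simp)
        simp only [List.tail_cons, List.map_cons, List.sum_cons] at ihb
        simp only [List.map_cons, List.sum_cons, List.tail_cons, Prod.mk.eta]
        have hDC : ((C - d.2 : ℕ) : ℝ) ≤ (C : ℝ) := by
          have : C - d.2 ≤ C := by omega
          exact_mod_cast this
        have h1a := mul_le_mul_of_nonneg_right h1C (hF a)
        have h1b := mul_le_mul_of_nonneg_right hDC (hF b)
        linarith

end DTWAux

namespace DTWAux

lemma mergeW_sum_snd (G : ℕ × ℕ → ℝ) (hG : ∀ x, 0 ≤ G x) (C : ℕ) :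
    ∀ (W1 W2 : List (ℕ × ℕ)), W1.IsChain stepRel → W2.IsChain stepRel →
    (∀ u ∈ W1.head?, ∀ v ∈ W2.head?, u.2 = v.1) →
    (∀ u ∈ W1.getLast?, ∀ v ∈ W2.getLast?, u.2 = v.1) →
    (∀ e ∈ W1, e.1 < C) →
    ∀ a ∈ W1.head?, ∀ c ∈ W2.head?,
    ((mergeW W1 W2).map fun t => G t.2).sum ≤
      ((C - a.1 : ℕ) : ℝ) * G c + (C : ℝ) * (W2.tail.map G).sum := by
  intro W1 W2
  induction W1, W2 using mergeW.induct with
  | case1 x =>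
    intro _ _ _ _ _ a ha
    simp at ha
  | case2 h t =>
    intro _ _ _ _ _ a ha c hc
    simp at hc
  | case3 a c t₂ ih =>
    intro h1 h2 hh hl hC a' ha c' hc
    simp only [List.head?_cons, Option.mem_some_iff] at ha hc
    subst ha; subst hc
    have hac : a.2 = c.1 := hh a (by simp) c (by simp)
    have hgc : ((a.2, c.2) : ℕ × ℕ) = c := by rw [hac]
    obtain ⟨v, hv⟩ : ∃ v, (c :: t₂).getLast? = some v :=
      Option.isSome_iff_exists.1 (List.getLast?_isSome.2 (by simp))
    have hva : v.1 = a.2 := by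
      have := hl a (by simp) v hv
      omega
    have hfst : ∀ e ∈ c :: t₂, e.1 = c.1 := by
      intro e he
      have h1e := chain_head_le h2 c (by simp) e he
      have h2e := chain_le_getLast h2 e he v hv
      omega
    have haC : a.1 < C := hC a (by simp)
    have h1C : (1 : ℝ) ≤ ((C - a.1 : ℕ) : ℝ) := by
      have : 1 ≤ C - a.1 := by omega
      exact_mod_cast this
    have hCC : ((C - a.1 : ℕ) : ℝ) ≤ (C : ℝ) := by
      have : C - a.1 ≤ C := by omega
      exact_mod_cast this
    rcases t₂ with _ | ⟨d, t₂'⟩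
    · rw [mergeW_eq3, mergeW_nil2]
      simp only [List.map_cons, List.map_nil, List.sum_cons, List.sum_nil, add_zero,
        List.tail_cons, mul_zero]
      rw [hgc]
      have h1a := mul_le_mul_of_nonneg_right h1C (hG c)
      linarith
    · have hd1 : d.1 = c.1 := hfst d (by simp)
      have ihb := ih h1 (List.isChain_cons_cons.1 h2).2
        (by
          intro u hu w hw
          simp only [List.head?_cons, Option.mem_some_iff] at hu hw
          subst hu; subst hw
          omega)
        (by
          intro u hu w hw
          exact hl u hu w (by rw [List.getLast?_cons_cons]; exact hw))
        hC a (by simp) d (by simp)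
      simp only [List.tail_cons] at ihb
      rw [mergeW_eq3]
      simp only [List.map_cons, List.sum_cons, List.tail_cons]
      rw [hgc]
      have h1a := mul_le_mul_of_nonneg_right h1C (hG c)
      have h1b := mul_le_mul_of_nonneg_right hCC (hG d)
      linarith
  | case4 a b t₁ c ih =>
    intro h1 h2 hh hl hC a' ha c' hc
    simp only [List.head?_cons, Option.mem_some_iff] at ha hc
    subst ha; subst hc
    have hac : a.2 = c.1 := hh a (by simp) c (by simp)
    have hgc : ((a.2, c.2) : ℕ × ℕ) = c := by rw [hac]
    obtain ⟨u, hu⟩ : ∃ u, (b :: t₁).getLast? = some u :=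
      Option.isSome_iff_exists.1 (List.getLast?_isSome.2 (by simp))
    have huc : u.2 = c.1 := by
      have := hl u (by rw [List.getLast?_cons_cons]; exact hu) c (by simp)
      omega
    have hb2 : b.2 = a.2 := by
      have h1b := chain_head_le h1 a (by simp) b (by simp)
      have h2b := chain_le_getLast (List.isChain_cons_cons.1 h1).2 b (by simp) u hu
      omega
    have hb1 : b.1 = a.1 + 1 := (List.isChain_cons_cons.1 h1).1.of_snd_eq hb2
    have haC : a.1 < C := hC a (by simp)
    have hbC : b.1 < C := hC b (by simp)
    have hgb : ((b.2, c.2) : ℕ × ℕ) = c := by rw [hb2, hac]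
    have ihb := ih (List.isChain_cons_cons.1 h1).2 h2
      (by
        intro x hx w hw
        simp only [List.head?_cons, Option.mem_some_iff] at hx hw
        subst hx; subst hw
        omega)
      (by
        intro x hx w hw
        exact hl x (by rw [List.getLast?_cons_cons]; exact hx) w hw)
      (fun e he => hC e (by simp [he]))
      b (by simp) c (by simp)
    simp only [List.tail_cons] at ihb
    rw [mergeW_eq4]
    simp only [List.map_cons, List.sum_cons, List.tail_cons, List.map_nil, List.sum_nil,
      mul_zero, add_zero] at ihb ⊢
    rw [hgc]
    have hco : ((C - a.1 : ℕ) : ℝ) = ((C - b.1 : ℕ) : ℝ) + 1 := by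
      have : C - a.1 = (C - b.1) + 1 := by omega
      exact_mod_cast this
    have hexp : ((C - a.1 : ℕ) : ℝ) * G c = ((C - b.1 : ℕ) : ℝ) * G c + G c := by
      rw [hco]; ring
    linarith
  | case5 a b t₁ c d t₂ ih1 ih2 ih3 =>
    intro h1 h2 hh hl hC a' ha c' hc
    simp only [List.head?_cons, Option.mem_some_iff] at ha hc
    subst ha; subst hc
    have hac : a.2 = c.1 := hh a (by simp) c (by simp)
    have hgc : ((a.2, c.2) : ℕ × ℕ) = c := by rw [hac]
    have hab := (List.isChain_cons_cons.1 h1).1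
    have hcd := (List.isChain_cons_cons.1 h2).1
    have haC : a.1 < C := hC a (by simp)
    have hbC : b.1 < C := hC b (by simp)
    have h1C : (1 : ℝ) ≤ ((C - a.1 : ℕ) : ℝ) := by
      have : 1 ≤ C - a.1 := by omega
      exact_mod_cast this
    have hCC : ((C - a.1 : ℕ) : ℝ) ≤ (C : ℝ) := by
      have : C - a.1 ≤ C := by omega
      exact_mod_cast this
    rw [mergeW_eq5]
    by_cases hb : b.2 = a.2
    · rw [if_pos hb]
      have hb1 : b.1 = a.1 + 1 := hab.of_snd_eq hb
      have ihb := ih1 (List.isChain_cons_cons.1 h1).2 h2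
        (by
          intro x hx w hw
          simp only [List.head?_cons, Option.mem_some_iff] at hx hw
          subst hx; subst hw
          omega)
        (by
          intro x hx w hw
          exact hl x (by rw [List.getLast?_cons_cons]; exact hx) w hw)
        (fun e he => hC e (by simp [he]))
        b (by simp) c (by simp)
      simp only [List.tail_cons] at ihb
      simp only [List.map_cons, List.sum_cons, List.tail_cons] at ihb ⊢
      rw [hgc]
      have hco : ((C - a.1 : ℕ) : ℝ) = ((C - b.1 : ℕ) : ℝ) + 1 := by
        have : C - a.1 = (C - b.1) + 1 := by omega
        exact_mod_cast this
      have hexp : ((C - a.1 : ℕ) : ℝ) * G c = ((C - b.1 : ℕ) : ℝ) * G c + G c := by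
        rw [hco]; ring
      linarith
    · rw [if_neg hb]
      by_cases hd : d.1 = c.1
      · rw [if_pos hd]
        have ihb := ih2 h1 (List.isChain_cons_cons.1 h2).2
          (by
            intro x hx w hw
            simp only [List.head?_cons, Option.mem_some_iff] at hx hw
            subst hx; subst hw
            omega)
          (by
            intro x hx w hw
            exact hl x hx w (by rw [List.getLast?_cons_cons]; exact hw))
          hC a (by simp) d (by simp)
        simp only [List.tail_cons] at ihb
        simp only [List.map_cons, List.sum_cons, List.tail_cons] at ihb ⊢
        rw [hgc]
        have h1a := mul_le_mul_of_nonneg_right h1C (hG c)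
        have h1b := mul_le_mul_of_nonneg_right hCC (hG d)
        linarith
      · rw [if_neg hd]
        have ihb := ih3 (List.isChain_cons_cons.1 h1).2 (List.isChain_cons_cons.1 h2).2
          (by
            intro x hx w hw
            simp only [List.head?_cons, Option.mem_some_iff] at hx hw
            subst hx; subst hw
            have hb2 : b.2 = a.2 + 1 := by
              rcases hab.snd_cases with h | h
              · exact absurd h hb
              · exact h
            have hd1 : d.1 = c.1 + 1 := by
              rcases hcd.fst_cases with h | h
              · exact absurd h hd
              · exact h
            omega)
          (by
            intro x hx w hw
            exact hl x (by rw [List.getLast?_cons_cons]; exact hx) w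
              (by rw [List.getLast?_cons_cons]; exact hw))
          (fun e he => hC e (by simp [he]))
          b (by simp) d (by simp)
        simp only [List.tail_cons] at ihb
        simp only [List.map_cons, List.sum_cons, List.tail_cons] at ihb ⊢
        rw [hgc]
        have hDC : ((C - b.1 : ℕ) : ℝ) ≤ (C : ℝ) := by
          have : C - b.1 ≤ C := by omega
          exact_mod_cast this
        have h1a := mul_le_mul_of_nonneg_right h1C (hG c)
        have h1b := mul_le_mul_of_nonneg_right hDC (hG d)
        linarith
end DTWAux


namespace DTWAux

/-- L-shaped warping: down the first column then across the last row. -/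
def Lpath (a b : ℕ) : List (ℕ × ℕ) :=
  ((List.range (a + 1)).map fun i => (i, 0)) ++ ((List.range b).map fun j => (a, j + 1))

lemma exists_warping {m₁ m₂ : ℕ} (h1 : 1 ≤ m₁) (h2 : 1 ≤ m₂) :
    ∃ W, IsWarping m₁ m₂ W := by
  obtain ⟨a, rfl⟩ : ∃ a, m₁ = a + 1 := ⟨m₁ - 1, by omega⟩
  obtain ⟨b, rfl⟩ : ∃ b, m₂ = b + 1 := ⟨m₂ - 1, by omega⟩
  refine ⟨Lpath a b, isWarping_iff.2 ⟨?_, ?_, ?_, ?_⟩⟩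
  · unfold Lpath
    intro h
    have := congrArg List.length h
    simp at this
  · unfold Lpath
    rw [List.range_succ_eq_map]
    simp
  · unfold Lpath
    simp only [Nat.add_sub_cancel]
    rcases Nat.eq_zero_or_pos b with rfl | hb
    · simp [List.range_succ]
    · obtain ⟨s, rfl⟩ : ∃ s, b = s + 1 := ⟨b - 1, by omega⟩
      rw [List.getLast?_append_of_ne_nil]
      · rw [List.range_succ]
        simp
      · rw [List.range_succ]
        simp
  · apply List.IsChain.append
    · rw [List.isChain_map, List.isChain_range_succ]
      intro i _
      right; left; rfl
    · rw [List.isChain_map]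
      rcases Nat.eq_zero_or_pos b with rfl | hb
      · simp
      · obtain ⟨s, rfl⟩ : ∃ s, b = s + 1 := ⟨b - 1, by omega⟩
        rw [List.isChain_range_succ]
        intro j _
        left; rfl
    · intro x hx y hy
      rcases Nat.eq_zero_or_pos b with rfl | hb
      · simp at hy
      · obtain ⟨s, rfl⟩ : ∃ s, b = s + 1 := ⟨b - 1, by omega⟩
        rw [List.range_succ] at hx
        simp at hx hy
        rw [List.range_succ_eq_map] at hy
        simp at hy
        subst hx
        subst hy
        left; rfl

end DTWAux

namespace DTWAux

variable {X : Type*} [MetricSpace X] [Inhabited X]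

lemma warpCost_nonneg (p : ℝ) (σ τ : List X) (W : List (ℕ × ℕ)) :
    0 ≤ warpCost p σ τ W := by
  apply List.sum_nonneg
  intro x hx
  simp only [List.mem_map] at hx
  obtain ⟨ij, _, rfl⟩ := hx
  exact Real.rpow_nonneg dist_nonneg p

lemma dtw_bddBelow (p : ℝ) (σ τ : List X) :
    BddBelow { c : ℝ | ∃ W, IsWarping σ.length τ.length W ∧ c = warpCost p σ τ W ^ (1 / p) } := by
  refine ⟨0, fun x hx => ?_⟩
  obtain ⟨W, _, rfl⟩ := hx
  exact Real.rpow_nonneg (warpCost_nonneg p σ τ W) _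

lemma dtw_nonneg (p : ℝ) (σ τ : List X) : 0 ≤ dtw p σ τ := by
  apply Real.sInf_nonneg
  intro x hx
  obtain ⟨W, _, rfl⟩ := hx
  exact Real.rpow_nonneg (warpCost_nonneg p σ τ W) _

lemma dtw_le (p : ℝ) {σ τ : List X} {W : List (ℕ × ℕ)}
    (h : IsWarping σ.length τ.length W) :
    dtw p σ τ ≤ warpCost p σ τ W ^ (1 / p) :=
  csInf_le (dtw_bddBelow p σ τ) ⟨W, h, rfl⟩

lemma exists_warping_close (p : ℝ) {σ τ : List X}
    (hσ : 1 ≤ σ.length) (hτ : 1 ≤ τ.length) {ε : ℝ} (hε : 0 < ε) :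
    ∃ W, IsWarping σ.length τ.length W ∧ warpCost p σ τ W ^ (1 / p) < dtw p σ τ + ε := by
  obtain ⟨W₀, hW₀⟩ := exists_warping hσ hτ
  have hne : { c : ℝ | ∃ W, IsWarping σ.length τ.length W ∧
      c = warpCost p σ τ W ^ (1 / p) }.Nonempty := ⟨_, W₀, hW₀, rfl⟩
  have hlt : dtw p σ τ < dtw p σ τ + ε := by linarith
  obtain ⟨x, hx, hxlt⟩ := exists_lt_of_csInf_lt hne hlt
  obtain ⟨W, hW, rfl⟩ := hx
  exact ⟨W, hW, hxlt⟩

lemma stepRel.swap {a b : ℕ × ℕ} (h : stepRel a b) : stepRel a.swap b.swap := by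
  rcases h with h | h | h <;> subst h <;> simp [stepRel, Prod.swap] <;> tauto

lemma isWarping_swap {m₁ m₂ : ℕ} {W : List (ℕ × ℕ)} (h : IsWarping m₁ m₂ W) :
    IsWarping m₂ m₁ (W.map Prod.swap) := by
  rw [isWarping_iff] at h ⊢
  obtain ⟨h1, h2, h3, h4⟩ := h
  refine ⟨by simpa using h1, ?_, ?_, ?_⟩
  · rw [List.head?_map, h2]; rfl
  · rw [List.getLast?_map, h3]; rfl
  · rw [List.isChain_map]
    exact h4.imp fun a b hab => hab.swap

lemma warpCost_swap (p : ℝ) (σ τ : List X) (W : List (ℕ × ℕ)) :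
    warpCost p τ σ (W.map Prod.swap) = warpCost p σ τ W := by
  unfold warpCost
  rw [List.map_map]
  congr 1
  apply List.map_congr_left
  intro ij _
  simp [Function.comp, dist_comm]

lemma dtw_symm_le (p : ℝ) (σ τ : List X) (hσ : 1 ≤ σ.length) (hτ : 1 ≤ τ.length) :
    dtw p σ τ ≤ dtw p τ σ := by
  obtain ⟨W₀, hW₀⟩ := exists_warping hτ hσ
  unfold dtw
  apply le_csInf
  · exact ⟨_, ⟨W₀, hW₀, rfl⟩⟩
  rintro b ⟨W, hW, rfl⟩
  refine csInf_le (dtw_bddBelow p σ τ) ⟨W.map Prod.swap, isWarping_swap hW, ?_⟩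
  rw [warpCost_swap]

lemma dtw_symm (p : ℝ) (σ τ : List X) (hσ : 1 ≤ σ.length) (hτ : 1 ≤ τ.length) :
    dtw p σ τ = dtw p τ σ :=
  le_antisymm (dtw_symm_le p σ τ hσ hτ) (dtw_symm_le p τ σ hτ hσ)

end DTWAux

namespace DTWAux

lemma dedup_lax : ∀ (L : List (ℕ × ℕ)), L ≠ [] → L.IsChain laxRel →
    ∃ L', L' ≠ [] ∧ L'.IsChain stepRel ∧ L'.head? = L.head? ∧ L'.getLast? = L.getLast? ∧
      ∀ F : ℕ × ℕ → ℝ, (∀ x, 0 ≤ F x) → (L'.map F).sum ≤ (L.map F).sum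
  | [] => by simp
  | [x] => by
    intro _ _
    exact ⟨[x], by simp, by simp, rfl, rfl, fun F hF => le_refl _⟩
  | x :: y :: t => by
    intro _ hc
    have hxy := (List.isChain_cons_cons.1 hc).1
    have hct : (y :: t).IsChain laxRel := (List.isChain_cons_cons.1 hc).2
    obtain ⟨L', hne, hchain, hhead, hlast, hsum⟩ := dedup_lax (y :: t) (by simp) hct
    rcases hxy with heq | hstep
    · subst heq
      refine ⟨L', hne, hchain, ?_, ?_, ?_⟩
      · rw [hhead]; rfl
      · rw [hlast, List.getLast?_cons_cons]
      · intro F hF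
        have hs := hsum F hF
        simp only [List.map_cons, List.sum_cons] at hs ⊢
        linarith [hF y]
    · refine ⟨x :: L', by simp, ?_, by simp, ?_, ?_⟩
      · rw [List.isChain_cons]
        refine ⟨?_, hchain⟩
        intro z hz
        rw [hhead] at hz
        simp only [List.head?_cons, Option.mem_some_iff] at hz
        subst hz
        exact hstep
      · rw [getLast?_cons_of_ne_nil _ hne, hlast, List.getLast?_cons_cons]
      · intro F hF
        have hs := hsum F hF
        simp only [List.map_cons, List.sum_cons] at hs ⊢
        linarith

lemma exists_compose_warping {m₁ m₂ m₃ : ℕ} {W1 W2 : List (ℕ × ℕ)}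
    (h1 : IsWarping m₁ m₂ W1) (h2 : IsWarping m₂ m₃ W2) :
    ∃ L', IsWarping m₁ m₃ L' ∧ ∀ F : ℕ × ℕ → ℝ, (∀ x, 0 ≤ F x) →
      (L'.map F).sum ≤ ((mergeW W1 W2).map fun t => F (t.1, t.2.2)).sum := by
  rw [isWarping_iff] at h1 h2
  obtain ⟨hne1, hh1, hl1, hc1⟩ := h1
  obtain ⟨hne2, hh2, hl2, hc2⟩ := h2
  obtain ⟨a, t1, rfl⟩ := List.exists_cons_of_ne_nil hne1
  obtain ⟨c, t2, rfl⟩ := List.exists_cons_of_ne_nil hne2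
  simp only [List.head?_cons, Option.some.injEq] at hh1 hh2
  subst hh1; subst hh2
  set P := (mergeW ((0,0) :: t1) ((0,0) :: t2)).map (fun t => ((t.1, t.2.2) : ℕ × ℕ)) with hP
  have hPne : P ≠ [] := by
    simp only [hP, ne_eq, List.map_eq_nil_iff]
    exact mergeW_ne_nil _ _ _ _
  have hPhead : P.head? = some (0, 0) := by
    rw [hP, List.head?_map, mergeW_head]
    rfl
  have hPlast : P.getLast? = some (m₁ - 1, m₃ - 1) := by
    rw [hP, List.getLast?_map, mergeW_getLast _ _ _ _ hl1 hl2]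
    rfl
  have hPchain : P.IsChain laxRel := by
    rw [hP, List.isChain_map]
    exact mergeW_chain _ _ hc1 hc2
  obtain ⟨L', hne, hchain, hhead, hlast, hsum⟩ := dedup_lax P hPne hPchain
  refine ⟨L', isWarping_iff.2 ⟨hne, by rw [hhead, hPhead], by rw [hlast, hPlast], hchain⟩, ?_⟩
  intro F hF
  have := hsum F hF
  rw [hP, List.map_map] at this
  exact this

lemma list_map_sum_range {β : Type*} (d : β) (l : List β) (f : β → ℝ) :
    (l.map f).sum = ∑ i ∈ Finset.range l.length, f (l.getD i d) := by
  induction l with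
  | nil => simp
  | cons x t ih =>
    rw [List.map_cons, List.sum_cons, List.length_cons, Finset.sum_range_succ', ih]
    simp only [List.getD_cons_succ, List.getD_cons_zero]
    ring

end DTWAux

namespace DTWAux

variable {X : Type*} [MetricSpace X] [Inhabited X]

set_option maxHeartbeats 1000000 in
/-- Weak triangle inequality for dynamic time warping. -/
lemma dtw_triangle (p : ℝ) (hp : 1 ≤ p) (x y z : List X)
    (hx : 1 ≤ x.length) (hy : 1 ≤ y.length) (hz : 1 ≤ z.length) :
    dtw p x z ≤ (z.length : ℝ) ^ (1 / p) * dtw p x y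
      + (x.length : ℝ) ^ (1 / p) * dtw p y z := by
  have hp0 : 0 < p := lt_of_lt_of_le one_pos hp
  have hip : 0 ≤ 1 / p := by positivity
  set Cz : ℝ := (z.length : ℝ) ^ (1 / p) with hCzdef
  set Cx : ℝ := (x.length : ℝ) ^ (1 / p) with hCxdef
  have hCz0 : 0 ≤ Cz := Real.rpow_nonneg (by positivity) _
  have hCx0 : 0 ≤ Cx := Real.rpow_nonneg (by positivity) _
  apply le_of_forall_pos_le_add
  intro ε hε
  set δ : ℝ := ε / (Cz + Cx + 1) with hδdef
  have hδ : 0 < δ := by positivity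
  obtain ⟨W1, hW1, hW1c⟩ := exists_warping_close p hx hy hδ
  obtain ⟨W2, hW2, hW2c⟩ := exists_warping_close p hy hz hδ
  obtain ⟨L', hL', hLsum⟩ := exists_compose_warping hW1 hW2
  have hiw1 := isWarping_iff.1 hW1
  have hiw2 := isWarping_iff.1 hW2
  obtain ⟨hne1, hh1, hl1, hc1⟩ := hiw1
  obtain ⟨hne2, hh2, hl2, hc2⟩ := hiw2
  set M := mergeW W1 W2 with hM
  set F0 : ℕ × ℕ → ℝ := fun ij => dist (x.getD ij.1 default) (z.getD ij.2 default) ^ p with hF0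
  set F1 : ℕ × ℕ → ℝ := fun ij => dist (x.getD ij.1 default) (y.getD ij.2 default) ^ p with hF1
  set G1 : ℕ × ℕ → ℝ := fun ij => dist (y.getD ij.1 default) (z.getD ij.2 default) ^ p with hG1
  have hF0n : ∀ ij, 0 ≤ F0 ij := fun ij => Real.rpow_nonneg dist_nonneg _
  have hF1n : ∀ ij, 0 ≤ F1 ij := fun ij => Real.rpow_nonneg dist_nonneg _
  have hG1n : ∀ ij, 0 ≤ G1 ij := fun ij => Real.rpow_nonneg dist_nonneg _
  -- step A: dtw is at most the cost of the composed warping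
  have hA : dtw p x z ≤ warpCost p x z L' ^ (1 / p) := dtw_le p hL'
  -- step B: cost of composed warping at most the merged-sum
  have hB : warpCost p x z L' ≤ (M.map fun t => F0 (t.1, t.2.2)).sum := hLsum F0 hF0n
  -- step C: pointwise triangle inequality
  have hC : (M.map fun t => F0 (t.1, t.2.2)).sum ≤
      (M.map fun t => (dist (x.getD t.1 default) (y.getD t.2.1 default)
        + dist (y.getD t.2.1 default) (z.getD t.2.2 default)) ^ p).sum := by
    apply List.sum_le_sum
    intro t _
    exact Real.rpow_le_rpow dist_nonneg (dist_triangle _ _ _) hp0.le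
  -- Minkowski
  set d0 : ℕ × ℕ × ℕ := (0, 0, 0) with hd0
  set f : ℕ → ℝ := fun i => dist (x.getD (M.getD i d0).1 default)
    (y.getD (M.getD i d0).2.1 default) with hf
  set g : ℕ → ℝ := fun i => dist (y.getD (M.getD i d0).2.1 default)
    (z.getD (M.getD i d0).2.2 default) with hg
  have hMink : (∑ i ∈ Finset.range M.length, (f i + g i) ^ p) ^ (1 / p) ≤
      (∑ i ∈ Finset.range M.length, f i ^ p) ^ (1 / p)
      + (∑ i ∈ Finset.range M.length, g i ^ p) ^ (1 / p) :=
    Real.Lp_add_le_of_nonneg (Finset.range M.length) hp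
      (fun i _ => dist_nonneg) (fun i _ => dist_nonneg)
  have hCsum : (M.map fun t => (dist (x.getD t.1 default) (y.getD t.2.1 default)
      + dist (y.getD t.2.1 default) (z.getD t.2.2 default)) ^ p).sum =
      ∑ i ∈ Finset.range M.length, (f i + g i) ^ p := by
    rw [list_map_sum_range d0]
  have hfsum : (∑ i ∈ Finset.range M.length, f i ^ p) =
      (M.map fun t => F1 (t.1, t.2.1)).sum := by
    rw [list_map_sum_range d0]
  have hgsum : (∑ i ∈ Finset.range M.length, g i ^ p) =
      (M.map fun t => G1 t.2).sum := by
    rw [list_map_sum_range d0]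
  -- multiplicity bounds
  obtain ⟨t1, rfl⟩ : ∃ t1, W1 = (0, 0) :: t1 := by
    obtain ⟨a, t1, rfl⟩ := List.exists_cons_of_ne_nil hne1
    simp only [List.head?_cons, Option.some.injEq] at hh1
    exact ⟨t1, by rw [hh1]⟩
  obtain ⟨t2, rfl⟩ : ∃ t2, W2 = (0, 0) :: t2 := by
    obtain ⟨c, t2, rfl⟩ := List.exists_cons_of_ne_nil hne2
    simp only [List.head?_cons, Option.some.injEq] at hh2
    exact ⟨t2, by rw [hh2]⟩
  have hhinv : ∀ u ∈ ((0,0) :: t1 : List (ℕ × ℕ)).head?,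
      ∀ v ∈ ((0,0) :: t2 : List (ℕ × ℕ)).head?, u.2 = v.1 := by
    intro u hu v hv
    simp only [List.head?_cons, Option.mem_some_iff] at hu hv
    subst hu; subst hv; rfl
  have hlinv : ∀ u ∈ ((0,0) :: t1 : List (ℕ × ℕ)).getLast?,
      ∀ v ∈ ((0,0) :: t2 : List (ℕ × ℕ)).getLast?, u.2 = v.1 := by
    intro u hu v hv
    rw [hl1] at hu
    rw [hl2] at hv
    simp only [Option.mem_some_iff] at hu hv
    subst hu; subst hv; rfl
  have hCzbound : ∀ e ∈ ((0,0) :: t2 : List (ℕ × ℕ)), e.2 < z.length := by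
    intro e he
    have := chain_le_getLast hc2 e he (y.length - 1, z.length - 1) (by rw [hl2]; rfl)
    omega
  have hCxbound : ∀ e ∈ ((0,0) :: t1 : List (ℕ × ℕ)), e.1 < x.length := by
    intro e he
    have := chain_le_getLast hc1 e he (x.length - 1, y.length - 1) (by rw [hl1]; rfl)
    omega
  have hAf : (M.map fun t => F1 (t.1, t.2.1)).sum ≤ (z.length : ℝ) * warpCost p x y ((0,0) :: t1) := by
    have h := mergeW_sum_fst F1 hF1n z.length ((0,0) :: t1) ((0,0) :: t2) hc1 hc2
      hhinv hlinv hCzbound (0,0) (by simp) (0,0) (by simp)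
    simp only [List.tail_cons, Nat.sub_zero] at h
    have hwc : warpCost p x y ((0,0) :: t1) = F1 (0,0) + (t1.map F1).sum := by
      simp [warpCost, hF1]
    rw [hwc]
    calc (M.map fun t => F1 (t.1, t.2.1)).sum ≤
        (z.length : ℝ) * F1 (0,0) + (z.length : ℝ) * (t1.map F1).sum := h
      _ = (z.length : ℝ) * (F1 (0,0) + (t1.map F1).sum) := by ring
  have hBg : (M.map fun t => G1 t.2).sum ≤ (x.length : ℝ) * warpCost p y z ((0,0) :: t2) := by
    have h := mergeW_sum_snd G1 hG1n x.length ((0,0) :: t1) ((0,0) :: t2) hc1 hc2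
      hhinv hlinv hCxbound (0,0) (by simp) (0,0) (by simp)
    simp only [List.tail_cons, Nat.sub_zero] at h
    have hwc : warpCost p y z ((0,0) :: t2) = G1 (0,0) + (t2.map G1).sum := by
      simp [warpCost, hG1]
    rw [hwc]
    calc (M.map fun t => G1 t.2).sum ≤
        (x.length : ℝ) * G1 (0,0) + (x.length : ℝ) * (t2.map G1).sum := h
      _ = (x.length : ℝ) * (G1 (0,0) + (t2.map G1).sum) := by ring
  -- combine
  have hW1cn : 0 ≤ warpCost p x y ((0,0) :: t1) := warpCost_nonneg _ _ _ _
  have hW2cn : 0 ≤ warpCost p y z ((0,0) :: t2) := warpCost_nonneg _ _ _ _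
  have hfpn : 0 ≤ ∑ i ∈ Finset.range M.length, f i ^ p :=
    Finset.sum_nonneg fun i _ => Real.rpow_nonneg dist_nonneg _
  have hgpn : 0 ≤ ∑ i ∈ Finset.range M.length, g i ^ p :=
    Finset.sum_nonneg fun i _ => Real.rpow_nonneg dist_nonneg _
  have step1 : warpCost p x z L' ^ (1 / p) ≤
      (∑ i ∈ Finset.range M.length, (f i + g i) ^ p) ^ (1 / p) := by
    apply Real.rpow_le_rpow (warpCost_nonneg _ _ _ _) _ hip
    rw [← hCsum]
    exact le_trans hB hC
  have step2 : (∑ i ∈ Finset.range M.length, f i ^ p) ^ (1 / p) ≤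
      ((z.length : ℝ) * warpCost p x y ((0,0) :: t1)) ^ (1 / p) := by
    apply Real.rpow_le_rpow hfpn _ hip
    rw [hfsum]
    exact hAf
  have step3 : (∑ i ∈ Finset.range M.length, g i ^ p) ^ (1 / p) ≤
      ((x.length : ℝ) * warpCost p y z ((0,0) :: t2)) ^ (1 / p) := by
    apply Real.rpow_le_rpow hgpn _ hip
    rw [hgsum]
    exact hBg
  have hmulz : ((z.length : ℝ) * warpCost p x y ((0,0) :: t1)) ^ (1 / p) =
      Cz * warpCost p x y ((0,0) :: t1) ^ (1 / p) := by
    rw [Real.mul_rpow (by positivity) hW1cn]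
  have hmulx : ((x.length : ℝ) * warpCost p y z ((0,0) :: t2)) ^ (1 / p) =
      Cx * warpCost p y z ((0,0) :: t2) ^ (1 / p) := by
    rw [Real.mul_rpow (by positivity) hW2cn]
  have hfin1 : Cz * warpCost p x y ((0,0) :: t1) ^ (1 / p) ≤ Cz * (dtw p x y + δ) :=
    mul_le_mul_of_nonneg_left (le_of_lt hW1c) hCz0
  have hfin2 : Cx * warpCost p y z ((0,0) :: t2) ^ (1 / p) ≤ Cx * (dtw p y z + δ) :=
    mul_le_mul_of_nonneg_left (le_of_lt hW2c) hCx0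
  have hδε : δ * (Cz + Cx + 1) = ε := by
    rw [hδdef]
    field_simp
  have hdtwxy : 0 ≤ dtw p x y := dtw_nonneg p x y
  have hdtwyz : 0 ≤ dtw p y z := dtw_nonneg p y z
  linarith [hA, step1, hMink, step2, step3, hmulz.le, hmulz.ge, hmulx.le, hmulx.ge, hfin1, hfin2, hδ.le, hδε.le, hδε.ge]
end DTWAux

/-- **Expected cost of a random simplified input sequence** (Theorem `lem:sampleonesequence`):
if `π` is drawn uniformly from `T` and `π̃` is an `(α,ℓ)`-simplification of `π` under `dtw_p`,
then `E_π[cost_p^1(T, π̃)] ≤ (2+α) m^{1/p} ℓ^{1/p} · OPT_ℓ`. The expectation is written as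
the average over `T`, and the bound is stated against every candidate `c ∈ X^{≤ℓ}`
(equivalently, against the optimal restricted `(p,1)`-mean cost `OPT_ℓ`). -/
theorem expected_cost_random_simplification {X : Type*} [MetricSpace X] [Inhabited X]
    (T : Finset (List X)) (hT : T.Nonempty) (n m ℓ : ℕ) (hn : T.card = n)
    (hm : ∀ τ ∈ T, 2 ≤ τ.length ∧ τ.length ≤ m)
    (hℓ2 : 2 ≤ ℓ) (hℓm : ℓ ≤ m)
    (p : ℝ) (hp : 1 ≤ p) (α : ℝ) (hα : 1 ≤ α)
    (simp : List X → List X)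
    (hsimp : ∀ τ ∈ T, SeqLE ℓ (simp τ) ∧
      ∀ π' : List X, SeqLE ℓ π' → dtw p τ (simp τ) ≤ α * dtw p τ π') :
    ∀ c : List X, SeqLE ℓ c →
      (∑ π ∈ T, dtwCost p 1 T (simp π)) / (T.card : ℝ) ≤
        (2 + α) * (m : ℝ) ^ (1 / p) * (ℓ : ℝ) ^ (1 / p) * dtwCost p 1 T c := by
  classical
  intro c hc
  have hp0 : 0 < p := lt_of_lt_of_le one_pos hp
  have hip : 0 ≤ 1 / p := by positivity
  set K : ℝ := (m : ℝ) ^ (1 / p) with hKdef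
  set L : ℝ := (ℓ : ℝ) ^ (1 / p) with hLdef
  have hm1 : (1 : ℝ) ≤ (m : ℝ) := by exact_mod_cast (by omega : 1 ≤ m)
  have hℓ1 : (1 : ℝ) ≤ (ℓ : ℝ) := by exact_mod_cast (by omega : 1 ≤ ℓ)
  have hK1 : 1 ≤ K := Real.one_le_rpow hm1 hip
  have hL1 : 1 ≤ L := Real.one_le_rpow hℓ1 hip
  have hK0 : 0 ≤ K := le_trans zero_le_one hK1
  have hL0 : 0 ≤ L := le_trans zero_le_one hL1
  obtain ⟨hc2, hcℓ⟩ := hc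
  have hc1 : 1 ≤ c.length := by omega
  -- per-pair bound
  have key : ∀ π ∈ T, ∀ τ ∈ T,
      dtw p (simp π) τ ≤ K * L * ((1 + α) * dtw p c π + dtw p c τ) := by
    intro π hπ τ hτ
    obtain ⟨⟨hs2, hsℓ⟩, hsim⟩ := hsimp π hπ
    have hπm := hm π hπ
    have hτm := hm τ hτ
    have hs1 : 1 ≤ (simp π).length := by omega
    have hπ1 : 1 ≤ π.length := by omega
    have hτ1 : 1 ≤ τ.length := by omega
    have t1 := DTWAux.dtw_triangle p hp (simp π) c τ hs1 hc1 hτ1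
    have t2 := DTWAux.dtw_triangle p hp (simp π) π c hs1 hπ1 hc1
    have t3 : dtw p (simp π) π = dtw p π (simp π) := DTWAux.dtw_symm p _ _ hs1 hπ1
    have t5 : dtw p π c = dtw p c π := DTWAux.dtw_symm p _ _ hπ1 hc1
    have t4 : dtw p (simp π) π ≤ α * dtw p c π := by
      rw [t3, ← t5]
      exact hsim c ⟨hc2, hcℓ⟩
    have n1 : 0 ≤ dtw p (simp π) c := DTWAux.dtw_nonneg p _ _
    have n2 : 0 ≤ dtw p c τ := DTWAux.dtw_nonneg p _ _
    have n3 : 0 ≤ dtw p (simp π) π := DTWAux.dtw_nonneg p _ _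
    have n4 : 0 ≤ dtw p c π := DTWAux.dtw_nonneg p _ _
    have mτ : ((τ.length : ℝ)) ^ (1 / p) ≤ K :=
      Real.rpow_le_rpow (by positivity) (by exact_mod_cast hτm.2) hip
    have ms : (((simp π).length : ℝ)) ^ (1 / p) ≤ L :=
      Real.rpow_le_rpow (by positivity) (by exact_mod_cast le_trans hsℓ (le_refl ℓ)) hip
    have mc : ((c.length : ℝ)) ^ (1 / p) ≤ L :=
      Real.rpow_le_rpow (by positivity) (by exact_mod_cast hcℓ) hip
    have nτ : (0 : ℝ) ≤ ((τ.length : ℝ)) ^ (1 / p) := Real.rpow_nonneg (by positivity) _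
    have ns : (0 : ℝ) ≤ (((simp π).length : ℝ)) ^ (1 / p) := Real.rpow_nonneg (by positivity) _
    have nc : (0 : ℝ) ≤ ((c.length : ℝ)) ^ (1 / p) := Real.rpow_nonneg (by positivity) _
    rw [t5] at t2
    have s2 : dtw p (simp π) c ≤ L * ((1 + α) * dtw p c π) := by
      have b1 : ((c.length : ℝ)) ^ (1 / p) * dtw p (simp π) π ≤ L * (α * dtw p c π) :=
        mul_le_mul mc t4 n3 hL0
      have b2 : (((simp π).length : ℝ)) ^ (1 / p) * dtw p c π ≤ L * dtw p c π :=
        mul_le_mul_of_nonneg_right ms n4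
      have hring : L * (α * dtw p c π) + L * dtw p c π = L * ((1 + α) * dtw p c π) := by ring
      linarith
    have c1 : ((τ.length : ℝ)) ^ (1 / p) * dtw p (simp π) c ≤ K * dtw p (simp π) c :=
      mul_le_mul_of_nonneg_right mτ n1
    have c2 : K * dtw p (simp π) c ≤ K * (L * ((1 + α) * dtw p c π)) :=
      mul_le_mul_of_nonneg_left s2 hK0
    have c3 : (((simp π).length : ℝ)) ^ (1 / p) * dtw p c τ ≤ L * dtw p c τ :=
      mul_le_mul_of_nonneg_right ms n2
    have c4 : L * dtw p c τ ≤ K * (L * dtw p c τ) :=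
      le_mul_of_one_le_left (mul_nonneg hL0 n2) hK1
    have hring2 : K * (L * ((1 + α) * dtw p c π)) + K * (L * dtw p c τ) =
        K * L * ((1 + α) * dtw p c π + dtw p c τ) := by ring
    linarith
  -- summation
  have hcostc : dtwCost p 1 T c = ∑ τ ∈ T, dtw p c τ := by
    unfold dtwCost
    exact Finset.sum_congr rfl fun τ _ => Real.rpow_one _
  have hcostc0 : 0 ≤ dtwCost p 1 T c := by
    rw [hcostc]
    exact Finset.sum_nonneg fun τ _ => DTWAux.dtw_nonneg p _ _
  have hsum1 : ∀ π ∈ T, dtwCost p 1 T (simp π) ≤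
      K * L * ((1 + α) * (n : ℝ) * dtw p c π + dtwCost p 1 T c) := by
    intro π hπ
    have he : dtwCost p 1 T (simp π) = ∑ τ ∈ T, dtw p (simp π) τ := by
      unfold dtwCost
      exact Finset.sum_congr rfl fun τ _ => Real.rpow_one _
    rw [he, hcostc]
    calc ∑ τ ∈ T, dtw p (simp π) τ
        ≤ ∑ τ ∈ T, K * L * ((1 + α) * dtw p c π + dtw p c τ) :=
          Finset.sum_le_sum fun τ hτ => key π hπ τ hτ
      _ = K * L * ((1 + α) * (n : ℝ) * dtw p c π + ∑ τ ∈ T, dtw p c τ) := by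
          rw [← Finset.mul_sum]
          congr 1
          rw [Finset.sum_add_distrib, Finset.sum_const, nsmul_eq_mul, hn]
          ring
  have hcard : (0 : ℝ) < (n : ℝ) := by
    have : 0 < n := by
      rw [← hn]
      exact Finset.card_pos.2 hT
    exact_mod_cast this
  have hsum2 : ∑ π ∈ T, dtwCost p 1 T (simp π) ≤
      (n : ℝ) * ((2 + α) * K * L * dtwCost p 1 T c) := by
    calc ∑ π ∈ T, dtwCost p 1 T (simp π)
        ≤ ∑ π ∈ T, K * L * ((1 + α) * (n : ℝ) * dtw p c π + dtwCost p 1 T c) :=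
          Finset.sum_le_sum hsum1
      _ = K * L * ((1 + α) * (n : ℝ) * (∑ π ∈ T, dtw p c π) + (n : ℝ) * dtwCost p 1 T c) := by
          rw [← Finset.mul_sum]
          congr 1
          rw [Finset.sum_add_distrib, Finset.sum_const, nsmul_eq_mul, ← Finset.mul_sum, hn]
      _ = K * L * ((1 + α) * (n : ℝ) * dtwCost p 1 T c + (n : ℝ) * dtwCost p 1 T c) := by
          rw [hcostc]
      _ = (n : ℝ) * ((2 + α) * K * L * dtwCost p 1 T c) := by ring
  rw [hn, div_le_iff₀ hcard]
  calc ∑ π ∈ T, dtwCost p 1 T (simp π)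
      ≤ (n : ℝ) * ((2 + α) * K * L * dtwCost p 1 T c) := hsum2
    _ = (2 + α) * K * L * dtwCost p 1 T c * (n : ℝ) := by ring
end

section
/- Non-asymptotic grid covering bound for Euclidean balls: let d ≥ 1 be an integer, let x ∈ ℝ^d, and let r > 0 and γ > 0 be real numbers. Then the number of grid points in the grid of cell width γ covering the Euclidean ball B(x, 8r) satisfies |𝔾(B(x,8r), γ)| ≤ 2 · ( 34r/(γ√d) + 5 )^d. -/
/-- The `γ`-grid-point of `x ∈ ℝ^d`: `G(γ,x) = (⌊x₁/γ⌋·γ, …, ⌊x_d/γ⌋·γ)`. -/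
noncomputable def gridPt (d : ℕ) (γ : ℝ) (x : EuclideanSpace ℝ (Fin d)) :
    EuclideanSpace ℝ (Fin d) :=
  WithLp.toLp 2 (fun i => (⌊x i / γ⌋ : ℝ) * γ)

/-- The grid of cell width `γ` covering `P ⊆ ℝ^d`: `𝔾(P,γ) = {G(γ,x) : x ∈ P}`. -/
noncomputable def gridOf (d : ℕ) (P : Set (EuclideanSpace ℝ (Fin d))) (γ : ℝ) :
    Set (EuclideanSpace ℝ (Fin d)) :=
  gridPt d γ '' P

open MeasureTheory Real

section aux

variable {d : ℕ} {γ : ℝ}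

lemma gridPt_apply (y : EuclideanSpace ℝ (Fin d)) (i : Fin d) :
    gridPt d γ y i = (⌊y i / γ⌋ : ℝ) * γ := rfl

/-- Membership in the "cube" of a grid point. -/
lemma gridPt_eq_gridPt_iff (hγ : 0 < γ) (y z : EuclideanSpace ℝ (Fin d)) :
    gridPt d γ z = gridPt d γ y ↔
      ∀ i, gridPt d γ y i ≤ z i ∧ z i < gridPt d γ y i + γ := by
  have hfloor : ∀ i : Fin d, (gridPt d γ y i ≤ z i ∧ z i < gridPt d γ y i + γ) ↔
      ⌊z i / γ⌋ = ⌊y i / γ⌋ := by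
    intro i
    rw [Int.floor_eq_iff, gridPt_apply]
    constructor
    · rintro ⟨h1, h2⟩
      constructor
      · rwa [le_div_iff₀ hγ]
      · rw [div_lt_iff₀ hγ]
        push_cast
        linarith
    · rintro ⟨h1, h2⟩
      rw [le_div_iff₀ hγ] at h1
      rw [div_lt_iff₀ hγ] at h2
      constructor
      · exact h1
      · push_cast at h2; linarith
  constructor
  · intro h i
    rw [hfloor i]
    have := congrFun (congrArg WithLp.ofLp h) i
    rw [gridPt_apply, gridPt_apply] at this
    exact_mod_cast mul_right_cancel₀ (ne_of_gt hγ) this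
  · intro h
    ext i
    rw [gridPt_apply, gridPt_apply, (hfloor i).1 (h i)]

lemma gridPt_self_mem_cube (hγ : 0 < γ) (y : EuclideanSpace ℝ (Fin d)) (i : Fin d) :
    gridPt d γ y i ≤ y i ∧ y i < gridPt d γ y i + γ := by
  have := (gridPt_eq_gridPt_iff hγ y y).1 rfl
  exact this i

/-- Coordinate distance is at most Euclidean distance. -/
lemma coord_dist_le (y x : EuclideanSpace ℝ (Fin d)) (i : Fin d) :
    dist (y i) (x i) ≤ dist y x := by
  rw [EuclideanSpace.dist_eq]
  have h1 : dist (y i) (x i) ^ 2 ≤ ∑ j, dist (y j) (x j) ^ 2 := by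
    exact Finset.single_le_sum (f := fun j => dist (y j) (x j) ^ 2)
      (fun j _ => sq_nonneg _) (Finset.mem_univ i)
  calc dist (y i) (x i) = Real.sqrt (dist (y i) (x i) ^ 2) := by
        rw [Real.sqrt_sq dist_nonneg]
    _ ≤ Real.sqrt (∑ j, dist (y j) (x j) ^ 2) := Real.sqrt_le_sqrt h1

/-- The cube of a grid point, as a preimage of a box under the identity equiv. -/
lemma cube_eq_preimage_pi (hγ : 0 < γ) (y : EuclideanSpace ℝ (Fin d)) :
    gridPt d γ ⁻¹' {gridPt d γ y} =
      (MeasurableEquiv.toLp 2 (Fin d → ℝ)).symm ⁻¹'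
        (Set.univ.pi fun i => Set.Ico (gridPt d γ y i) (gridPt d γ y i + γ)) := by
  ext z
  simp only [Set.mem_preimage, Set.mem_singleton_iff, Set.mem_pi, Set.mem_univ, forall_true_left,
    Set.mem_Ico]
  rw [gridPt_eq_gridPt_iff hγ y z]
  rfl

lemma volume_cube (hγ : 0 < γ) (y : EuclideanSpace ℝ (Fin d)) :
    volume (gridPt d γ ⁻¹' {gridPt d γ y}) = ENNReal.ofReal (γ ^ d) := by
  rw [cube_eq_preimage_pi hγ y]
  rw [(EuclideanSpace.volume_preserving_symm_measurableEquiv_toLp (Fin d)).measure_preimage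
    ((MeasurableSet.univ_pi (fun i => measurableSet_Ico)).nullMeasurableSet)]
  rw [volume_pi_pi]
  simp only [Real.volume_Ico, add_sub_cancel_left]
  rw [Finset.prod_const, ENNReal.ofReal_pow hγ.le]
  simp

/-- Gaussian bound on the volume of a Euclidean ball:
`vol(B(x,R)) ≤ (2πe R²/d)^{d/2} = (√(2πe/d)·R)^d`. -/
lemma volume_closedBall_le (hd : 1 ≤ d) (x : EuclideanSpace ℝ (Fin d)) {R : ℝ} (hR : 0 < R) :
    volume (Metric.closedBall x R) ≤
      ENNReal.ofReal ((Real.sqrt (2 * π * Real.exp 1 / d) * R) ^ d) := by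
  have hdR : (0:ℝ) < d := by exact_mod_cast hd
  set b : ℝ := d / (2 * R ^ 2) with hb
  have hbpos : 0 < b := by positivity
  have hmeas : Measurable fun z : EuclideanSpace ℝ (Fin d) =>
      ENNReal.ofReal (Real.exp (b * R ^ 2) * Real.exp (-b * ‖z - x‖ ^ 2)) := by
    fun_prop
  have step1 : volume (Metric.closedBall x R) ≤
      ∫⁻ z, ENNReal.ofReal (Real.exp (b * R ^ 2) * Real.exp (-b * ‖z - x‖ ^ 2)) := by
    calc volume (Metric.closedBall x R)
        = ∫⁻ z in Metric.closedBall x R, 1 := (setLIntegral_one _).symm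
      _ ≤ ∫⁻ z in Metric.closedBall x R,
            ENNReal.ofReal (Real.exp (b * R ^ 2) * Real.exp (-b * ‖z - x‖ ^ 2)) := by
          apply setLIntegral_mono hmeas
          intro z hz
          rw [← Real.exp_add]
          apply ENNReal.one_le_ofReal.2
          apply Real.one_le_exp
          have hzx : ‖z - x‖ ≤ R := by
            rw [← dist_eq_norm]
            exact Metric.mem_closedBall.1 hz
          have h2 : ‖z - x‖ ^ 2 ≤ R ^ 2 := by
            apply sq_le_sq' _ hzx
            linarith [norm_nonneg (z - x)]
          nlinarith
      _ ≤ ∫⁻ z, ENNReal.ofReal (Real.exp (b * R ^ 2) * Real.exp (-b * ‖z - x‖ ^ 2)) :=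
          setLIntegral_le_lintegral _ _
  have hint : Integrable (fun w : EuclideanSpace ℝ (Fin d) => Real.exp (-b * ‖w‖ ^ 2)) := by
    have := GaussianFourier.integrable_cexp_neg_mul_sq_norm_add
      (V := EuclideanSpace ℝ (Fin d)) (b := (b:ℂ)) (by simpa using hbpos) 0 0
    simp only [Complex.ofReal_zero, zero_mul, add_zero, neg_mul] at this
    have h2 := this.re
    refine h2.congr (Filter.Eventually.of_forall fun w => ?_)
    simp only [RCLike.re_to_complex]
    rw [show (-((b:ℂ) * (‖w‖:ℂ) ^ 2)) = ((-(b * ‖w‖ ^ 2) : ℝ) : ℂ) by push_cast; ring,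
      Complex.exp_ofReal_re, neg_mul]
  have step2 : (∫⁻ z, ENNReal.ofReal (Real.exp (b * R ^ 2) * Real.exp (-b * ‖z - x‖ ^ 2)))
      = ENNReal.ofReal (Real.exp (b * R ^ 2)) *
        ENNReal.ofReal ((π / b) ^ ((d : ℝ) / 2)) := by
    have : ∀ z : EuclideanSpace ℝ (Fin d),
        ENNReal.ofReal (Real.exp (b * R ^ 2) * Real.exp (-b * ‖z - x‖ ^ 2)) =
        ENNReal.ofReal (Real.exp (b * R ^ 2)) * ENNReal.ofReal (Real.exp (-b * ‖z - x‖ ^ 2)) := by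
      intro z; rw [ENNReal.ofReal_mul (Real.exp_nonneg _)]
    simp_rw [this]
    rw [lintegral_const_mul _ (by fun_prop)]
    congr 1
    have htrans : (∫⁻ z : EuclideanSpace ℝ (Fin d), ENNReal.ofReal (Real.exp (-b * ‖z - x‖ ^ 2)))
        = ∫⁻ w : EuclideanSpace ℝ (Fin d), ENNReal.ofReal (Real.exp (-b * ‖w‖ ^ 2)) :=
      lintegral_sub_right_eq_self (fun w => ENNReal.ofReal (Real.exp (-b * ‖w‖ ^ 2))) x
    rw [htrans, ← ofReal_integral_eq_lintegral_ofReal hint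
      (Filter.Eventually.of_forall fun w => (Real.exp_nonneg _))]
    rw [GaussianFourier.integral_rexp_neg_mul_sq_norm hbpos]
    congr 2
    simp [finrank_euclideanSpace]
  rw [step2] at step1
  refine le_trans step1 ?_
  rw [← ENNReal.ofReal_mul (Real.exp_nonneg _)]
  apply ENNReal.ofReal_le_ofReal
  have hbR : b * R ^ 2 = (d : ℝ) / 2 := by
    field_simp [hb]
    rw [hb]; field_simp
  have hpib : π / b = 2 * π * R ^ 2 / d := by
    rw [hb]
    field_simp
  rw [hbR, hpib]
  have key : Real.exp ((d:ℝ)/2) * (2 * π * R ^ 2 / d) ^ ((d : ℝ) / 2)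
      = (2 * π * Real.exp 1 * R ^ 2 / d) ^ ((d : ℝ) / 2) := by
    rw [← Real.exp_one_rpow ((d:ℝ)/2), ← Real.mul_rpow (Real.exp_nonneg _) (by positivity)]
    congr 1
    ring
  rw [key]
  have hsq : 2 * π * Real.exp 1 * R ^ 2 / d = (Real.sqrt (2 * π * Real.exp 1 / d) * R) ^ 2 := by
    rw [mul_pow, Real.sq_sqrt (by positivity)]
    ring
  rw [hsq]
  set c := Real.sqrt (2 * π * Real.exp 1 / d) * R with hc
  have hc0 : 0 ≤ c := by rw [hc]; positivity
  apply le_of_eq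
  calc ((c ^ 2 : ℝ)) ^ ((d:ℝ)/2) = (c ^ ((2:ℝ))) ^ ((d:ℝ)/2) := by rw [Real.rpow_two]
    _ = c ^ ((2:ℝ) * ((d:ℝ)/2)) := (Real.rpow_mul hc0 _ _).symm
    _ = c ^ ((d:ℝ)) := by rw [show (2:ℝ) * ((d:ℝ)/2) = (d:ℝ) by ring]
    _ = c ^ d := Real.rpow_natCast _ d

end aux

/-- **Non-asymptotic grid covering bound for Euclidean balls** (Lemma `lem:volumebound`):
`|𝔾(B(x,8r),γ)| ≤ 2 (34r/(γ√d) + 5)^d`. -/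
theorem grid_covering_ball_bound (d : ℕ) (hd : 1 ≤ d)
    (x : EuclideanSpace ℝ (Fin d)) (r γ : ℝ) (hr : 0 < r) (hγ : 0 < γ) :
    (Nat.card (gridOf d (Metric.closedBall x (8 * r)) γ) : ℝ) ≤
      2 * (34 * r / (γ * Real.sqrt d) + 5) ^ d := by
  have hd0 : (0:ℝ) < d := by exact_mod_cast hd
  have hsd : 0 < Real.sqrt d := Real.sqrt_pos.2 hd0
  set S := gridOf d (Metric.closedBall x (8 * r)) γ with hSdef
  set A : ℝ := 34 * r / (γ * Real.sqrt d) + 5 with hAdef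
  have hA : 0 < A := by positivity
  -- idempotence of the grid rounding, coordinatewise
  have hidem : ∀ (y : EuclideanSpace ℝ (Fin d)) (i : Fin d),
      ((⌊gridPt d γ y i / γ⌋ : ℤ) : ℝ) * γ = gridPt d γ y i := by
    intro y i
    rw [gridPt_apply, mul_div_cancel_right₀ _ (ne_of_gt hγ), Int.floor_intCast]
  -- finiteness of S
  have hfin : S.Finite := by
    have hT : (Set.univ.pi fun i : Fin d =>
        (Set.Icc ⌊(x i - 8*r)/γ⌋ ⌊(x i + 8*r)/γ⌋ : Set ℤ)).Finite :=
      Set.Finite.pi fun i => Set.finite_Icc _ _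
    apply Set.Finite.of_finite_image (f := fun g (i : Fin d) => ⌊g i / γ⌋)
    · apply hT.subset
      rintro _ ⟨g, hg, rfl⟩
      obtain ⟨y, hy, rfl⟩ := hg
      intro i _
      simp only [Set.mem_Icc]
      have hcoord : |y i - x i| ≤ 8 * r := by
        have h1 := coord_dist_le y x i
        rw [Real.dist_eq] at h1
        exact h1.trans (Metric.mem_closedBall.1 hy)
      rw [abs_le] at hcoord
      have heq : ⌊gridPt d γ y i / γ⌋ = ⌊y i / γ⌋ := by
        rw [gridPt_apply, mul_div_cancel_right₀ _ (ne_of_gt hγ), Int.floor_intCast]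
      rw [heq]
      constructor
      · apply Int.floor_le_floor; gcongr <;> linarith
      · apply Int.floor_le_floor; gcongr <;> linarith
    · rintro _ ⟨y, hy, rfl⟩ _ ⟨y', hy', rfl⟩ hjj
      ext i
      have := congrFun hjj i
      simp only at this
      calc gridPt d γ y i = ((⌊gridPt d γ y i / γ⌋ : ℤ) : ℝ) * γ := (hidem y i).symm
        _ = ((⌊gridPt d γ y' i / γ⌋ : ℤ) : ℝ) * γ := by rw [this]
        _ = gridPt d γ y' i := hidem y' i
  set F : Finset (EuclideanSpace ℝ (Fin d)) := hfin.toFinset with hFdef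
  set R : ℝ := 8 * r + γ * Real.sqrt d with hRdef
  have hR : 0 < R := by positivity
  -- each cube is contained in the enlarged ball
  have hcube_sub : ∀ g ∈ F, gridPt d γ ⁻¹' {g} ⊆ Metric.closedBall x R := by
    intro g hg
    obtain ⟨y, hy, rfl⟩ := hfin.mem_toFinset.1 hg
    intro z hz
    have hz' : gridPt d γ z = gridPt d γ y := hz
    have hzy : dist z y ≤ γ * Real.sqrt d := by
      rw [EuclideanSpace.dist_eq]
      have hterm : ∀ i : Fin d, dist (z i) (y i) ^ 2 ≤ γ ^ 2 := by
        intro i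
        have h1 := (gridPt_eq_gridPt_iff hγ y z).1 hz' i
        have h2 := gridPt_self_mem_cube hγ y i
        rw [Real.dist_eq, sq_abs]
        nlinarith [h1.1, h1.2, h2.1, h2.2]
      calc Real.sqrt (∑ i, dist (z i) (y i) ^ 2)
          ≤ Real.sqrt (∑ _i : Fin d, γ ^ 2) :=
            Real.sqrt_le_sqrt (Finset.sum_le_sum fun i _ => hterm i)
        _ = γ * Real.sqrt d := by
            rw [Finset.sum_const, Finset.card_univ, Fintype.card_fin, nsmul_eq_mul,
              Real.sqrt_mul (by positivity), Real.sqrt_sq hγ.le]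
            ring
    calc dist z x ≤ dist z y + dist y x := dist_triangle z y x
      _ ≤ γ * Real.sqrt d + 8 * r := by
          have := Metric.mem_closedBall.1 hy
          linarith
      _ = R := by rw [hRdef]; ring
  -- cubes are pairwise disjoint
  have hdisj : (↑F : Set (EuclideanSpace ℝ (Fin d))).PairwiseDisjoint
      (fun g => gridPt d γ ⁻¹' {g}) := by
    intro g _ g' _ hne
    apply Set.disjoint_left.2
    intro z hz hz'
    exact hne ((Set.mem_preimage.1 hz).symm.trans (Set.mem_preimage.1 hz'))
  -- cubes are measurable
  have hmeascube : ∀ g ∈ F, MeasurableSet (gridPt d γ ⁻¹' {g}) := by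
    intro g hg
    obtain ⟨y, _, rfl⟩ := hfin.mem_toFinset.1 hg
    rw [cube_eq_preimage_pi hγ y]
    exact (MeasurableSet.univ_pi fun i => measurableSet_Ico).preimage
      (MeasurableEquiv.toLp 2 (Fin d → ℝ)).symm.measurable
  -- each cube has volume γ^d
  have hvol : ∀ g ∈ F, volume (gridPt d γ ⁻¹' {g}) = ENNReal.ofReal (γ ^ d) := by
    intro g hg
    obtain ⟨y, _, rfl⟩ := hfin.mem_toFinset.1 hg
    exact volume_cube hγ y
  -- counting via volume
  have hsum : (F.card : ENNReal) * ENNReal.ofReal (γ ^ d) ≤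
      volume (Metric.closedBall x R) := by
    calc (F.card : ENNReal) * ENNReal.ofReal (γ ^ d)
        = ∑ g ∈ F, volume (gridPt d γ ⁻¹' {g}) := by
          rw [Finset.sum_congr rfl hvol, Finset.sum_const, nsmul_eq_mul]
      _ = volume (⋃ g ∈ F, gridPt d γ ⁻¹' {g}) :=
          (measure_biUnion_finset hdisj hmeascube).symm
      _ ≤ volume (Metric.closedBall x R) := by
          apply measure_mono
          exact Set.iUnion₂_subset hcube_sub
  have hball := volume_closedBall_le hd x hR
  -- real inequality: √(2πe/d) * R ≤ γ * A
  have hs4 : Real.sqrt (2 * π * Real.exp 1) ≤ 4.25 := by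
    rw [show (4.25:ℝ) = Real.sqrt (4.25 ^ 2) from (Real.sqrt_sq (by norm_num)).symm]
    apply Real.sqrt_le_sqrt
    nlinarith [Real.pi_lt_d2, Real.exp_one_lt_d9, Real.pi_gt_three, Real.exp_one_gt_d9]
  have hcsd : Real.sqrt (2 * π * Real.exp 1 / d) * Real.sqrt d
      = Real.sqrt (2 * π * Real.exp 1) := by
    rw [← Real.sqrt_mul (by positivity), div_mul_cancel₀ _ (ne_of_gt hd0)]
  have hcval : Real.sqrt (2 * π * Real.exp 1 / d)
      = Real.sqrt (2 * π * Real.exp 1) / Real.sqrt d := by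
    rw [eq_div_iff (ne_of_gt hsd)]; exact hcsd
  have hs0 : (0:ℝ) ≤ Real.sqrt (2 * π * Real.exp 1) := Real.sqrt_nonneg _
  have hcR : Real.sqrt (2 * π * Real.exp 1 / d) * R ≤ γ * A := by
    rw [hcval, hRdef, hAdef, div_mul_eq_mul_div, div_le_iff₀ hsd]
    have hexp : γ * (34 * r / (γ * Real.sqrt d) + 5) * Real.sqrt d
        = 34 * r + 5 * γ * Real.sqrt d := by
      field_simp
    rw [hexp]
    nlinarith [mul_nonneg (mul_nonneg (by linarith : (0:ℝ) ≤ 4.25 - Real.sqrt (2 * π * Real.exp 1)) hr.le) (by norm_num : (0:ℝ) ≤ 8),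
      mul_nonneg (mul_nonneg (by linarith : (0:ℝ) ≤ 5 - Real.sqrt (2 * π * Real.exp 1)) hγ.le) hsd.le]
  have hpow : (Real.sqrt (2 * π * Real.exp 1 / d) * R) ^ d ≤ γ ^ d * A ^ d := by
    rw [← mul_pow]
    exact pow_le_pow_left₀ (by positivity) hcR d
  have hfinal : (F.card : ENNReal) * ENNReal.ofReal (γ ^ d) ≤
      ENNReal.ofReal (γ ^ d) * ENNReal.ofReal (A ^ d) := by
    refine hsum.trans (hball.trans ?_)
    rw [← ENNReal.ofReal_mul (by positivity)]
    exact ENNReal.ofReal_le_ofReal hpow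
  have hne0 : ENNReal.ofReal (γ ^ d) ≠ 0 := (ENNReal.ofReal_pos.2 (by positivity)).ne'
  have hcard_le : (F.card : ENNReal) ≤ ENNReal.ofReal (A ^ d) := by
    rw [mul_comm] at hfinal
    exact (ENNReal.mul_le_mul_iff_right hne0 ENNReal.ofReal_ne_top).1 hfinal
  have hcardR : (F.card : ℝ) ≤ A ^ d := by
    rw [← ENNReal.ofReal_natCast] at hcard_le
    exact (ENNReal.ofReal_le_ofReal_iff (by positivity)).1 hcard_le
  have hNcard : Nat.card S = F.card := by
    rw [Nat.card_coe_set_eq, Set.ncard_eq_toFinset_card S hfin]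
  rw [hNcard]
  have : (0:ℝ) ≤ A ^ d := by positivity
  calc (F.card : ℝ) ≤ A ^ d := hcardR
    _ ≤ 2 * A ^ d := by linarith
end

section
/- Lower bound for the Gamma function: for every real number z > 0, Γ(z) ≥ √(2π) · z^{z−1/2} · e^{−z}. -/
set_option maxHeartbeats 1000000

open Real Filter

noncomputable def binetF (x : ℝ) : ℝ :=
  Real.log (Real.Gamma x) - (x - 1 / 2) * Real.log x + x

lemma log_one_add_inv_ge (x : ℝ) (hx : 0 < x) :
    2 / (2 * x + 1) ≤ Real.log (1 + x⁻¹) := by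
  have h := hasSum_log_one_add_inv hx
  have h0 := le_hasSum h 0 (fun j _ => by positivity)
  simpa [div_eq_mul_inv] using h0

lemma binetF_step (x : ℝ) (hx : 0 < x) : binetF (x + 1) ≤ binetF x := by
  have hΓ : Real.Gamma (x + 1) = x * Real.Gamma x := Real.Gamma_add_one hx.ne'
  have hΓpos : 0 < Real.Gamma x := Real.Gamma_pos_of_pos hx
  have hlogΓ : Real.log (Real.Gamma (x + 1)) = Real.log x + Real.log (Real.Gamma x) := by
    rw [hΓ, Real.log_mul hx.ne' hΓpos.ne']
  have hinv : Real.log (1 + x⁻¹) = Real.log (x + 1) - Real.log x := by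
    rw [show (1 : ℝ) + x⁻¹ = (x + 1) / x by field_simp, Real.log_div (by linarith) hx.ne']
  have hkey : 2 / (2 * x + 1) ≤ Real.log (x + 1) - Real.log x := by
    rw [← hinv]; exact log_one_add_inv_ge x hx
  have hmul : (x + 1 / 2) * (2 / (2 * x + 1)) ≤ (x + 1 / 2) * (Real.log (x + 1) - Real.log x) :=
    mul_le_mul_of_nonneg_left hkey (by linarith)
  have h1 : (x + 1 / 2) * (2 / (2 * x + 1)) = 1 := by field_simp
  rw [h1] at hmul
  simp only [binetF, hlogΓ]
  nlinarith [hmul]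

lemma binetF_iterate (z : ℝ) (hz : 0 < z) : ∀ n : ℕ, binetF (z + n) ≤ binetF z := by
  intro n
  induction n with
  | zero => simp
  | succ k ih =>
    have h : binetF (z + k + 1) ≤ binetF (z + k) := binetF_step _ (by positivity)
    have he : z + ((k : ℝ) + 1) = z + k + 1 := by ring
    push_cast
    rw [he]
    linarith [h]

lemma stirling_lower (n : ℕ) (hn : 1 ≤ n) :
    Real.sqrt Real.pi * (Real.sqrt (2 * n) * ((n : ℝ) / Real.exp 1) ^ n) ≤ (n.factorial : ℝ) := by
  obtain ⟨k, rfl⟩ := Nat.exists_eq_add_of_le' hn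
  have hmono : Antitone (Stirling.stirlingSeq ∘ Nat.succ) := Stirling.stirlingSeq'_antitone
  have htend : Filter.Tendsto (Stirling.stirlingSeq ∘ Nat.succ) atTop (nhds (Real.sqrt Real.pi)) :=
    Stirling.tendsto_stirlingSeq_sqrt_pi.comp (tendsto_add_atTop_nat 1)
  have hge : Real.sqrt Real.pi ≤ Stirling.stirlingSeq (k + 1) := hmono.le_of_tendsto htend k
  have hd : (0 : ℝ) < Real.sqrt (2 * ((k + 1 : ℕ) : ℝ)) * (((k + 1 : ℕ) : ℝ) / Real.exp 1) ^ (k + 1) := by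
    have h0 : (0 : ℝ) < ((k + 1 : ℕ) : ℝ) := by positivity
    positivity
  have h := mul_le_mul_of_nonneg_right hge hd.le
  rw [Stirling.stirlingSeq, div_mul_cancel₀ _ hd.ne'] at h
  exact_mod_cast h

lemma binetF_lower (x : ℝ) (hx : 1 ≤ x) :
    1 / 2 * Real.log (2 * Real.pi) - 1 / (2 * (⌊x⌋₊ : ℝ)) ≤ binetF x := by
  set m : ℕ := ⌊x⌋₊ with hm
  have hm1 : 1 ≤ m := Nat.le_floor (by exact_mod_cast hx)
  have hmR : (1 : ℝ) ≤ (m : ℝ) := by exact_mod_cast hm1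
  have hmpos : (0 : ℝ) < (m : ℝ) := by linarith
  have hxpos : (0 : ℝ) < x := by linarith
  have hfl : (m : ℝ) ≤ x := Nat.floor_le hxpos.le
  have hfl2 : x < (m : ℝ) + 1 := Nat.lt_floor_add_one x
  set t : ℝ := x - m with ht
  have ht0 : 0 ≤ t := by simp only [ht]; linarith
  have ht1 : t < 1 := by simp only [ht]; linarith
  have hΓx : 0 < Real.Gamma x := Real.Gamma_pos_of_pos hxpos
  set L : ℝ := Real.log x with hL
  set M : ℝ := Real.log (m : ℝ) with hM
  -- convexity: log Γ(m+1) ≤ log Γ x + (1-t) log x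
  have hconv : Real.log (Real.Gamma ((m : ℝ) + 1)) ≤
      Real.log (Real.Gamma x) + (1 - t) * L := by
    have h := Real.convexOn_log_Gamma.2 (Set.mem_Ioi.mpr hxpos)
      (Set.mem_Ioi.mpr (by linarith : (0:ℝ) < x + 1)) ht0 (by linarith : (0:ℝ) ≤ 1 - t)
      (by ring)
    have hpt : t • x + (1 - t) • (x + 1) = (m : ℝ) + 1 := by
      simp only [smul_eq_mul, ht]; ring
    rw [hpt] at h
    have hΓx1 : Real.Gamma (x + 1) = x * Real.Gamma x := Real.Gamma_add_one hxpos.ne'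
    simp only [Function.comp_apply, smul_eq_mul, hΓx1,
      Real.log_mul hxpos.ne' hΓx.ne'] at h
    linarith [h]
  have hΓm : Real.Gamma ((m : ℝ) + 1) = (m.factorial : ℝ) := by
    exact_mod_cast Real.Gamma_nat_eq_factorial m
  have h1 : Real.log (m.factorial : ℝ) ≤ Real.log (Real.Gamma x) + (1 - t) * L := by
    rw [← hΓm]; exact hconv
  -- Stirling lower bound in log form
  have hst : Real.sqrt Real.pi * (Real.sqrt (2 * m) * ((m : ℝ) / Real.exp 1) ^ m) ≤
      (m.factorial : ℝ) := stirling_lower m hm1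
  have hstpos : (0 : ℝ) < Real.sqrt Real.pi * (Real.sqrt (2 * m) * ((m : ℝ) / Real.exp 1) ^ m) := by
    positivity
  have h2 : Real.log Real.pi / 2 + (Real.log 2 + M) / 2
      + (m : ℝ) * (M - 1) ≤ Real.log (m.factorial : ℝ) := by
    have h := Real.log_le_log hstpos hst
    rw [Real.log_mul (by positivity) (by positivity),
      Real.log_mul (by positivity) (by positivity),
      Real.log_sqrt Real.pi_pos.le, Real.log_sqrt (by positivity),
      Real.log_pow, Real.log_div hmpos.ne' (Real.exp_pos 1).ne', Real.log_exp,
      Real.log_mul (by norm_num) hmpos.ne'] at h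
    linarith [h]
  -- log x - log m ≤ t / m
  have hdiv : L - M ≤ t / m := by
    have h := Real.log_le_sub_one_of_pos (show (0:ℝ) < x / m by positivity)
    rw [Real.log_div hxpos.ne' hmpos.ne'] at h
    have he : x / m - 1 = t / m := by field_simp [ht]; exact ht.symm
    rw [he] at h
    exact h
  have hmul : ((m : ℝ) + 1 / 2) * (L - M) ≤ ((m : ℝ) + 1 / 2) * (t / m) :=
    mul_le_mul_of_nonneg_left hdiv (by linarith)
  have hmul2 : ((m : ℝ) + 1 / 2) * (t / m) = t + t / (2 * m) := by field_simp
  have htm : t / (2 * (m : ℝ)) ≤ 1 / (2 * m) := by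
    gcongr
  have h3 : (m : ℝ) * L - (m : ℝ) * M + (1/2) * L - (1/2) * M ≤ t + 1 / (2 * m) := by
    linarith [hmul, hmul2.le, hmul2.ge, htm]
  have hlog2pi : Real.log (2 * Real.pi) = Real.log 2 + Real.log Real.pi :=
    Real.log_mul (by norm_num) Real.pi_pos.ne'
  have heq : (x - 1 / 2) * L = (m : ℝ) * L + t * L - (1 / 2) * L := by
    simp only [ht]; ring
  have hx' : x = (m : ℝ) + t := by simp only [ht]; ring
  clear_value m t L M
  simp only [binetF, ← hL]
  rw [hlog2pi, heq]
  linarith [h1, h2, h3, hx'.le, hx'.ge]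

lemma binetF_ge (z : ℝ) (hz : 0 < z) : 1 / 2 * Real.log (2 * Real.pi) ≤ binetF z := by
  have hkey : ∀ n : ℕ, 1 ≤ n → 1 / 2 * Real.log (2 * Real.pi) - 1 / (n : ℝ) ≤ binetF z := by
    intro n hn
    have hnR : (1 : ℝ) ≤ (n : ℝ) := by exact_mod_cast hn
    have h1 := binetF_iterate z hz n
    have h2 := binetF_lower (z + n) (by linarith)
    have hflo : (n : ℝ) ≤ (⌊z + (n : ℝ)⌋₊ : ℝ) := by
      have : n ≤ ⌊z + (n : ℝ)⌋₊ := Nat.le_floor (by push_cast; linarith)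
      exact_mod_cast this
    have hd : 1 / (2 * (⌊z + (n : ℝ)⌋₊ : ℝ)) ≤ 1 / (n : ℝ) := by
      apply one_div_le_one_div_of_le (by linarith)
      linarith
    linarith
  have htend : Filter.Tendsto
      (fun n : ℕ => 1 / 2 * Real.log (2 * Real.pi) - 1 / (n : ℝ)) atTop
      (nhds (1 / 2 * Real.log (2 * Real.pi))) := by
    have := tendsto_const_nhds (x := 1 / 2 * Real.log (2 * Real.pi)) (f := atTop (α := ℕ))
      |>.sub tendsto_one_div_atTop_nhds_zero_nat
    simpa using this
  refine le_of_tendsto htend ?_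
  filter_upwards [eventually_ge_atTop 1] with n hn using hkey n hn

/-- **Lower bound for the Gamma function**: for all `z > 0`,
`Γ(z) ≥ √(2π) · z^(z - 1/2) · e^(-z)`. -/
theorem gamma_lower_bound (z : ℝ) (hz : 0 < z) :
    Real.sqrt (2 * Real.pi) * z ^ (z - 1 / 2) * Real.exp (-z) ≤ Real.Gamma z := by
  have hΓ : 0 < Real.Gamma z := Real.Gamma_pos_of_pos hz
  have hF := binetF_ge z hz
  simp only [binetF] at hF
  have h2pi : (0 : ℝ) < 2 * Real.pi := by positivity
  calc Real.sqrt (2 * Real.pi) * z ^ (z - 1 / 2) * Real.exp (-z)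
      = Real.exp (Real.log (2 * Real.pi) * (1 / 2)) * Real.exp (Real.log z * (z - 1 / 2))
        * Real.exp (-z) := by
        rw [Real.sqrt_eq_rpow, Real.rpow_def_of_pos h2pi, Real.rpow_def_of_pos hz]
    _ = Real.exp (Real.log (2 * Real.pi) * (1 / 2) + Real.log z * (z - 1 / 2) + -z) := by
        rw [← Real.exp_add, ← Real.exp_add]
    _ ≤ Real.exp (Real.log (Real.Gamma z)) := by
        apply Real.exp_le_exp.mpr
        nlinarith [hF]
    _ = Real.Gamma z := Real.exp_log hΓ
end
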